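/- arXiv:2001.11705 — 3 statements merged into one kernel-verified Lean document; each statement's English description precedes it below -/
import Mathlib

section
/- Let α, β ∈ (0,1) with α + β > 1, and let K₁, K₂ : ℤ² → [0,∞) be symmetric with K₁(m) ≤ C/(1+|m|²)^α, K₂(m) ≤ C/(1+|m|²)^β. For N ∈ ℕ set (K₂)_N(m) = K₂(m)·𝟙_{|m| ≤ N}. Then there exists C' = C'(α, β, C) such that |K₁ ⋆ K₂(m) − K₁ ⋆ (K₂)_N(m)| ≤ C'/(1 + max{|m|, N}²)^{α+β−1} for all m ∈ ℤ² and N ∈ ℕ. -/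
open Finset

lemma rpow_mvt {p a b : ℝ} (ha : 0 < a) (hab : a < b) :
    ∃ c, a < c ∧ c < b ∧ b ^ p - a ^ p = p * c ^ (p - 1) * (b - a) := by
  have hcont : ContinuousOn (fun x : ℝ => x ^ p) (Set.Icc a b) := by
    intro x hx
    have hx0 : x ≠ 0 := ne_of_gt (lt_of_lt_of_le ha hx.1)
    exact (Real.continuousAt_rpow_const x p (Or.inl hx0)).continuousWithinAt
  have hderiv : ∀ x ∈ Set.Ioo a b, HasDerivAt (fun x : ℝ => x ^ p) (p * x ^ (p - 1)) x := by
    intro x hx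
    exact Real.hasDerivAt_rpow_const (Or.inl (ne_of_gt (ha.trans hx.1)))
  obtain ⟨c, hc, hceq⟩ := exists_hasDerivAt_eq_slope (fun x : ℝ => x ^ p)
    (fun x => p * x ^ (p - 1)) hab hcont hderiv
  refine ⟨c, hc.1, hc.2, ?_⟩
  have hb : b - a ≠ 0 := by linarith
  field_simp at hceq
  linarith [hceq]

/-- For q > 1 and x ≥ 1 : (q-1)(x+1)^(-q) ≤ x^(1-q) - (x+1)^(1-q). -/
lemma step_tail {q x : ℝ} (hq : 1 < q) (hx : 1 ≤ x) :
    (q - 1) * (x + 1) ^ (-q) ≤ x ^ (1 - q) - (x + 1) ^ (1 - q) := by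
  have hx0 : (0:ℝ) < x := lt_of_lt_of_le one_pos hx
  obtain ⟨c, hc1, hc2, hceq⟩ := rpow_mvt (p := 1 - q) hx0 (by linarith : x < x + 1)
  have hc0 : 0 < c := hx0.trans hc1
  have h1 : (x + 1) ^ (-q) ≤ c ^ (-q) :=
    Real.rpow_le_rpow_of_nonpos hc0 (le_of_lt hc2) (by linarith)
  have e : (1:ℝ) - q - 1 = -q := by ring
  rw [e] at hceq
  have h2 : x ^ (1 - q) - (x + 1) ^ (1 - q) = (q - 1) * c ^ (-q) := by
    linear_combination -hceq
  rw [h2]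
  exact mul_le_mul_of_nonneg_left h1 (by linarith)

/-- For 0 < p ≤ 2 and x ≥ 2 : (p/2) x^(p-1) ≤ x^p - (x-1)^p. -/
lemma step_ball {p x : ℝ} (hp : 0 < p) (hp2 : p ≤ 2) (hx : 2 ≤ x) :
    p / 2 * x ^ (p - 1) ≤ x ^ p - (x - 1) ^ p := by
  have h1 : (0:ℝ) < x - 1 := by linarith
  obtain ⟨c, hc1, hc2, hceq⟩ := rpow_mvt (p := p) h1 (by linarith : x - 1 < x)
  have hc0 : 0 < c := h1.trans hc1
  have hceq' : x ^ p - (x - 1) ^ p = p * c ^ (p - 1) := by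
    rw [hceq]; ring
  rw [hceq']
  rcases le_total p 1 with h | h
  · have : x ^ (p - 1) ≤ c ^ (p - 1) :=
      Real.rpow_le_rpow_of_nonpos hc0 (le_of_lt hc2) (by linarith)
    have h6 := mul_le_mul_of_nonneg_left this (le_of_lt hp)
    have h7 : 0 ≤ x ^ (p - 1) := Real.rpow_nonneg (by linarith) _
    nlinarith [h6, h7]
  · have hcx : x / 2 ≤ c := by linarith
    have h2 : (x / 2) ^ (p - 1) ≤ c ^ (p - 1) :=
      Real.rpow_le_rpow (by linarith) hcx (by linarith)
    have h3 : (x / 2) ^ (p - 1) = x ^ (p - 1) * (1/2 : ℝ) ^ (p - 1) := by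
      rw [div_eq_mul_inv, Real.mul_rpow (by linarith) (by norm_num)]
      norm_num
    have h4 : (1/2 : ℝ) ^ ((1:ℝ)) ≤ (1/2 : ℝ) ^ (p - 1) :=
      Real.rpow_le_rpow_of_exponent_ge (by norm_num) (by norm_num) (by linarith)
    have h5 : ((1:ℝ)/2) ^ ((1:ℝ)) = (1/2 : ℝ) := Real.rpow_one _
    have hxp : 0 ≤ x ^ (p - 1) := Real.rpow_nonneg (by linarith) _
    have h6 : x ^ (p - 1) * (1/2 : ℝ) ≤ x ^ (p - 1) * (1/2 : ℝ) ^ (p - 1) :=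
      mul_le_mul_of_nonneg_left (le_trans (le_of_eq h5.symm) h4) hxp
    have h7 : x ^ (p - 1) * (1/2 : ℝ) ≤ c ^ (p - 1) := by
      rw [h3] at h2; linarith
    nlinarith [mul_le_mul_of_nonneg_left h7 (le_of_lt hp)]

lemma telescope_Icc (g : ℕ → ℝ) (n M : ℕ) (h : n ≤ M) :
    ∑ k ∈ Icc n M, (g k - g (k + 1)) = g n - g (M + 1) := by
  induction M, h using Nat.le_induction with
  | base => simp [Finset.Icc_self]
  | succ M hM ih =>
      rw [Finset.sum_Icc_succ_top (by omega : n ≤ M + 1), ih]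
      ring

lemma L1 {q : ℝ} (hq : 1 < q) (n M : ℕ) (hn : 1 ≤ n) :
    ∑ k ∈ Icc n M, ((k : ℝ)) ^ (-q) ≤ (2 : ℝ) ^ q / (q - 1) * (n : ℝ) ^ (1 - q) := by
  have hq1 : (0:ℝ) < q - 1 := by linarith
  have h2q : (0:ℝ) < (2:ℝ) ^ q := Real.rpow_pos_of_pos (by norm_num) q
  have hnp : (0:ℝ) < (n:ℝ) := by exact_mod_cast hn
  rcases lt_or_ge M n with h | h
  · rw [Finset.Icc_eq_empty (by omega)]
    simp only [Finset.sum_empty]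
    positivity
  · have hterm : ∀ k ∈ Icc n M, ((k:ℝ)) ^ (-q) ≤
        (2:ℝ) ^ q / (q - 1) * (((k:ℝ)) ^ (1 - q) - (((k:ℝ) + 1)) ^ (1 - q)) := by
      intro k hk
      have hk1 : 1 ≤ (k:ℝ) := by
        have := (Finset.mem_Icc.mp hk).1; exact_mod_cast le_trans hn this
      have hk0 : (0:ℝ) < k := lt_of_lt_of_le one_pos hk1
      have hstep := step_tail hq hk1
      have hdbl : ((k:ℝ)) ^ (-q) ≤ (2:ℝ) ^ q * ((k:ℝ) + 1) ^ (-q) := by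
        have h1 : ((2:ℝ) * k) ^ (-q) ≤ ((k:ℝ) + 1) ^ (-q) :=
          Real.rpow_le_rpow_of_nonpos (by linarith) (by linarith) (by linarith)
        have h2 : ((2:ℝ) * k) ^ (-q) = (2:ℝ) ^ (-q) * (k:ℝ) ^ (-q) :=
          Real.mul_rpow (by norm_num) (by linarith)
        have h3 : (2:ℝ) ^ q * (2:ℝ) ^ (-q) = 1 := by
          rw [← Real.rpow_add (by norm_num)]; simp
        nlinarith [Real.rpow_nonneg (by linarith : (0:ℝ) ≤ (k:ℝ)) (-q), h2q]
      calc ((k:ℝ)) ^ (-q) ≤ (2:ℝ) ^ q * ((k:ℝ) + 1) ^ (-q) := hdbl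
        _ ≤ (2:ℝ) ^ q / (q - 1) * (((k:ℝ)) ^ (1 - q) - (((k:ℝ) + 1)) ^ (1 - q)) := by
            rw [div_mul_eq_mul_div, le_div_iff₀ hq1]
            calc (2:ℝ) ^ q * ((k:ℝ) + 1) ^ (-q) * (q - 1)
                = (2:ℝ) ^ q * ((q - 1) * ((k:ℝ) + 1) ^ (-q)) := by ring
              _ ≤ (2:ℝ) ^ q * (((k:ℝ)) ^ (1 - q) - (((k:ℝ) + 1)) ^ (1 - q)) :=
                  mul_le_mul_of_nonneg_left hstep (le_of_lt h2q)
    calc ∑ k ∈ Icc n M, ((k : ℝ)) ^ (-q)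
        ≤ ∑ k ∈ Icc n M, (2:ℝ) ^ q / (q - 1) *
            (((k:ℝ)) ^ (1 - q) - (((k:ℝ) + 1)) ^ (1 - q)) := Finset.sum_le_sum hterm
      _ = (2:ℝ) ^ q / (q - 1) * ∑ k ∈ Icc n M,
            ((fun j : ℕ => ((j:ℝ)) ^ (1 - q)) k - (fun j : ℕ => ((j:ℝ)) ^ (1 - q)) (k+1)) := by
          rw [← Finset.mul_sum]; congr 1; apply Finset.sum_congr rfl; intro k _
          push_cast; ring_nf
      _ ≤ (2:ℝ) ^ q / (q - 1) * (n : ℝ) ^ (1 - q) := by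
          rw [telescope_Icc _ _ _ h]
          have : (0:ℝ) ≤ ((M + 1 : ℕ) : ℝ) ^ (1 - q) := Real.rpow_nonneg (by positivity) _
          have h4 : (0:ℝ) < (2:ℝ) ^ q / (q - 1) := by positivity
          nlinarith

lemma L2 {p : ℝ} (hp : 0 < p) (hp2 : p ≤ 2) (n : ℕ) :
    ∑ k ∈ Icc 1 n, ((k : ℝ)) ^ (p - 1) ≤ (1 + 2 / p) * (n : ℝ) ^ p := by
  induction n with
  | zero => simp [Real.zero_rpow (ne_of_gt hp)]
  | succ n ih =>
      rcases Nat.eq_zero_or_pos n with h0 | h1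
      · subst h0
        simp only [Finset.Icc_self, Finset.sum_singleton]
        rw [Nat.cast_one, Real.one_rpow, Real.one_rpow]
        have : (0:ℝ) ≤ 2/p := by positivity
        linarith
      · rw [Finset.sum_Icc_succ_top (by omega : 1 ≤ n + 1)]
        have hx : (2:ℝ) ≤ ((n:ℝ) + 1) := by
          have : (1:ℝ) ≤ (n:ℝ) := by exact_mod_cast h1
          linarith
        have hstep := step_ball hp hp2 hx
        have hsub : ((n:ℝ) + 1) - 1 = (n:ℝ) := by ring
        rw [hsub] at hstep
        have hmono : (n:ℝ) ^ p ≤ ((n:ℝ) + 1) ^ p :=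
          Real.rpow_le_rpow (by positivity) (by linarith) (le_of_lt hp)
        have hcast : ((n + 1 : ℕ) : ℝ) = (n:ℝ) + 1 := by push_cast; ring
        rw [hcast]
        have h2p : (0:ℝ) < 2 / p := by positivity
        -- x^{p-1} ≤ (2/p) (x^p - n^p)
        have hkey : ((n:ℝ) + 1) ^ (p - 1) ≤ 2 / p * (((n:ℝ) + 1) ^ p - (n:ℝ) ^ p) := by
          rw [div_mul_eq_mul_div, le_div_iff₀ hp]
          linarith
        nlinarith [ih, hkey, hmono]

/-- squared Euclidean norm of a lattice point of `ℤ²` -/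
def latNormSq (m : ℤ × ℤ) : ℝ := (m.1 : ℝ) ^ 2 + (m.2 : ℝ) ^ 2

lemma latNormSq_nonneg (l : ℤ × ℤ) : 0 ≤ latNormSq l := by
  unfold latNormSq; positivity

noncomputable def latBox (M : ℕ) : Finset (ℤ × ℤ) := Finset.Icc (-(M:ℤ), -(M:ℤ)) ((M:ℤ), (M:ℤ))

lemma mem_latBox {M : ℕ} {l : ℤ × ℤ} :
    l ∈ latBox M ↔ |l.1| ≤ (M:ℤ) ∧ |l.2| ≤ (M:ℤ) := by
  simp only [latBox, Finset.mem_Icc, Prod.le_def, abs_le]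
  tauto

lemma latBox_card (M : ℕ) : (latBox M).card = (2 * M + 1) ^ 2 := by
  rw [latBox, Finset.Icc_prod_def, Finset.card_product]
  simp only [Int.card_Icc]
  have : ((M:ℤ) + 1 - -(M:ℤ)).toNat = 2 * M + 1 := by omega
  rw [this]; ring

lemma latBox_subset (M : ℕ) : latBox M ⊆ latBox (M + 1) := by
  intro l hl
  rw [mem_latBox] at *
  push_cast
  omega

lemma latNormSq_le_of_mem {M : ℕ} {l : ℤ × ℤ} (h : l ∈ latBox M) :
    latNormSq l ≤ 2 * (M:ℝ) ^ 2 := by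
  rw [mem_latBox] at h
  have h1 : ((|l.1| : ℤ) : ℝ) ≤ (M:ℝ) := by exact_mod_cast h.1
  have h2 : ((|l.2| : ℤ) : ℝ) ≤ (M:ℝ) := by exact_mod_cast h.2
  rw [Int.cast_abs] at h1 h2
  unfold latNormSq
  have a1 : |(l.1 : ℝ)| ^ 2 = (l.1:ℝ)^2 := sq_abs _
  have a2 : |(l.2 : ℝ)| ^ 2 = (l.2:ℝ)^2 := sq_abs _
  nlinarith [abs_nonneg (l.1:ℝ), abs_nonneg (l.2:ℝ)]

lemma le_latNormSq_of_not_mem {M : ℕ} {l : ℤ × ℤ} (h : l ∉ latBox M) :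
    ((M:ℝ) + 1) ^ 2 ≤ latNormSq l := by
  rw [mem_latBox] at h
  push_neg at h
  unfold latNormSq
  rcases le_or_gt |l.1| (M:ℤ) with h1 | h1
  · have h2 := h h1
    have : ((M:ℝ) + 1) ≤ |(l.2 : ℝ)| := by
      have : ((M:ℤ) + 1) ≤ |l.2| := by omega
      calc ((M:ℝ) + 1) = (((M:ℤ) + 1 : ℤ) : ℝ) := by push_cast; ring
        _ ≤ ((|l.2| : ℤ) : ℝ) := by exact_mod_cast this
        _ = |(l.2 : ℝ)| := by rw [Int.cast_abs]
    nlinarith [sq_abs (l.2:ℝ), abs_nonneg (l.2:ℝ), sq_nonneg (l.1:ℝ), sq_nonneg ((M:ℝ)+1)]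
  · have : ((M:ℝ) + 1) ≤ |(l.1 : ℝ)| := by
      have : ((M:ℤ) + 1) ≤ |l.1| := by omega
      calc ((M:ℝ) + 1) = (((M:ℤ) + 1 : ℤ) : ℝ) := by push_cast; ring
        _ ≤ ((|l.1| : ℤ) : ℝ) := by exact_mod_cast this
        _ = |(l.1 : ℝ)| := by rw [Int.cast_abs]
    nlinarith [sq_abs (l.1:ℝ), abs_nonneg (l.1:ℝ), sq_nonneg (l.2:ℝ), sq_nonneg ((M:ℝ)+1)]

lemma shell_sum (f : ℤ × ℤ → ℝ) (hf0 : ∀ l, 0 ≤ f l) (H : ℕ → ℝ) (hH0 : ∀ k, 0 ≤ H k)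
    (hH : ∀ (k : ℕ) (l : ℤ × ℤ), ((k:ℝ)) ^ 2 ≤ latNormSq l → latNormSq l ≤ 2 * ((k:ℝ)) ^ 2 →
      f l ≤ H k) :
    ∀ M : ℕ, ∑ l ∈ latBox M, f l ≤ H 0 + ∑ k ∈ Icc 1 M, 8 * (k:ℝ) * H k := by
  intro M
  induction M with
  | zero =>
      have hbox : latBox 0 = {((0:ℤ), (0:ℤ))} := by
        ext l; rw [mem_latBox]; simp [Prod.ext_iff]
      rw [hbox, Finset.sum_singleton]
      have h0 : latNormSq ((0:ℤ), (0:ℤ)) = 0 := by unfold latNormSq; norm_num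
      have := hH 0 ((0:ℤ), (0:ℤ)) (by rw [h0]; norm_num) (by rw [h0]; norm_num)
      simpa using this
  | succ M ih =>
      have hsub := latBox_subset M
      rw [← Finset.sum_sdiff hsub]
      have hcard : (latBox (M+1) \ latBox M).card = 8 * M + 8 := by
        rw [Finset.card_sdiff_of_subset hsub, latBox_card, latBox_card]
        ring_nf
        omega
      have hshell : ∑ l ∈ latBox (M+1) \ latBox M, f l ≤ 8 * ((M:ℝ) + 1) * H (M + 1) := by
        have hb : ∀ l ∈ latBox (M+1) \ latBox M, f l ≤ H (M + 1) := by
          intro l hl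
          rw [Finset.mem_sdiff] at hl
          have hlow := le_latNormSq_of_not_mem hl.2
          have hup := latNormSq_le_of_mem hl.1
          have hc : (((M + 1 : ℕ)) : ℝ) = (M:ℝ) + 1 := by push_cast; ring
          exact hH (M+1) l (by push_cast; exact hlow) (by push_cast at hup ⊢; exact hup)
        calc ∑ l ∈ latBox (M+1) \ latBox M, f l
            ≤ (latBox (M+1) \ latBox M).card • H (M + 1) :=
              Finset.sum_le_card_nsmul _ _ _ hb
          _ = ((8 * M + 8 : ℕ) : ℝ) * H (M + 1) := by rw [hcard, nsmul_eq_mul]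
          _ ≤ 8 * ((M:ℝ) + 1) * H (M + 1) := by
              apply mul_le_mul_of_nonneg_right _ (hH0 _)
              push_cast; linarith
      rw [Finset.sum_Icc_succ_top (by omega : 1 ≤ M + 1)]
      have hc : ((M + 1 : ℕ) : ℝ) = (M:ℝ) + 1 := by push_cast; ring
      rw [hc]
      linarith

lemma tsum_le_of_shell {f : ℤ × ℤ → ℝ} {H : ℕ → ℝ} {B : ℝ}
    (hf0 : ∀ l, 0 ≤ f l) (hsum : Summable f) (hH0 : ∀ k, 0 ≤ H k)
    (hH : ∀ (k : ℕ) (l : ℤ × ℤ), ((k:ℝ)) ^ 2 ≤ latNormSq l → latNormSq l ≤ 2 * ((k:ℝ)) ^ 2 →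
      f l ≤ H k)
    (hB : ∀ M : ℕ, H 0 + ∑ k ∈ Icc 1 M, 8 * (k:ℝ) * H k ≤ B) :
    ∑' l, f l ≤ B := by
  apply hsum.tsum_le_of_sum_le
  intro F
  set M := F.sup (fun l => max l.1.natAbs l.2.natAbs) with hM
  have hFsub : F ⊆ latBox M := by
    intro l hl
    rw [mem_latBox]
    have := Finset.le_sup (f := fun l : ℤ × ℤ => max l.1.natAbs l.2.natAbs) hl
    constructor
    · rw [Int.abs_eq_natAbs]; exact_mod_cast le_trans (le_max_left _ _) this
    · rw [Int.abs_eq_natAbs]; exact_mod_cast le_trans (le_max_right _ _) this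
  calc ∑ l ∈ F, f l ≤ ∑ l ∈ latBox M, f l :=
        Finset.sum_le_sum_of_subset_of_nonneg hFsub (fun l _ _ => hf0 l)
    _ ≤ H 0 + ∑ k ∈ Icc 1 M, 8 * (k:ℝ) * H k := shell_sum f hf0 H hH0 hH M
    _ ≤ B := hB M

lemma summable_one_dim {d : ℝ} (hd : 1 < 2 * d) :
    Summable (fun x : ℤ => 1 / (1 + (x:ℝ) ^ 2) ^ d) := by
  have hd0 : 0 < d := by linarith
  have hnat : Summable (fun n : ℕ => 1 / (1 + (n:ℝ) ^ 2) ^ d) := by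
    have hbase : Summable (fun n : ℕ => 1 / ((n:ℝ)) ^ (2*d)) :=
      (Real.summable_one_div_nat_rpow).mpr hd
    have hshift : Summable (fun n : ℕ => 1 / (((n:ℝ)) + 1) ^ (2*d)) := by
      have := (summable_nat_add_iff (f := fun n : ℕ => 1 / ((n:ℝ)) ^ (2*d)) 1).mpr hbase
      refine this.congr fun n => ?_
      push_cast
      ring_nf
    have hsum2 : Summable (fun n : ℕ => (2:ℝ) ^ d * (1 / (((n:ℝ)) + 1) ^ (2*d))) :=
      hshift.mul_left _
    refine Summable.of_nonneg_of_le (fun n => by positivity) (fun n => ?_) hsum2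
    -- 1/(1+n²)^d ≤ 2^d / (n+1)^(2d)
    have h1 : ((n:ℝ) + 1) ^ 2 ≤ 2 * (1 + (n:ℝ) ^ 2) := by nlinarith [sq_nonneg ((n:ℝ) - 1)]
    have h2 : (((n:ℝ) + 1) ^ 2) ^ d ≤ (2 * (1 + (n:ℝ) ^ 2)) ^ d :=
      Real.rpow_le_rpow (by positivity) h1 (le_of_lt hd0)
    have h3 : (((n:ℝ) + 1) ^ 2) ^ d = ((n:ℝ) + 1) ^ (2 * d) := by
      rw [← Real.rpow_natCast ((n:ℝ)+1) 2, ← Real.rpow_mul (by positivity)]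
      norm_num
    have h4 : (2 * (1 + (n:ℝ) ^ 2)) ^ d = 2 ^ d * (1 + (n:ℝ) ^ 2) ^ d :=
      Real.mul_rpow (by norm_num) (by positivity)
    have h5 : ((n:ℝ) + 1) ^ (2*d) ≤ 2 ^ d * (1 + (n:ℝ) ^ 2) ^ d := by
      rw [← h3, ← h4]; exact h2
    rw [mul_one_div, div_le_div_iff₀ (by positivity) (by positivity), one_mul]
    exact h5
  apply Summable.of_nat_of_neg
  · exact hnat
  · refine hnat.congr fun n => ?_
    push_cast
    ring_nf

lemma summable_g {g : ℝ} (hg : 1 < g) :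
    Summable (fun l : ℤ × ℤ => 1 / (1 + latNormSq l) ^ g) := by
  have hd : 1 < 2 * (g/2) := by linarith
  have h1d := summable_one_dim hd
  have hnn : (0 : ℤ → ℝ) ≤ (fun x : ℤ => 1 / (1 + (x:ℝ) ^ 2) ^ (g/2)) := by
    intro x
    have : (0:ℝ) ≤ 1 / (1 + (x:ℝ) ^ 2) ^ (g/2) := by positivity
    simpa using this
  have hprod := Summable.mul_of_nonneg h1d h1d hnn hnn
  refine Summable.of_nonneg_of_le (fun l => by unfold latNormSq; positivity) (fun l => ?_) hprod
  set x := (l.1 : ℝ); set y := (l.2 : ℝ)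
  have hs : latNormSq l = x ^ 2 + y ^ 2 := rfl
  rw [hs]
  have h1 : (1 + x^2) * (1 + y^2) ≤ (1 + (x^2 + y^2)) ^ 2 := by nlinarith [sq_nonneg (x*y), sq_nonneg (x^2 - y^2)]
  have h2 : ((1 + x^2) * (1 + y^2)) ^ (g/2) ≤ ((1 + (x^2 + y^2)) ^ 2) ^ (g/2) :=
    Real.rpow_le_rpow (by positivity) h1 (by linarith)
  have h3 : ((1 + (x^2 + y^2)) ^ 2) ^ (g/2) = (1 + (x^2 + y^2)) ^ g := by
    rw [← Real.rpow_natCast (1 + (x^2+y^2)) 2, ← Real.rpow_mul (by positivity)]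
    congr 1
    push_cast
    ring
  have h4 : ((1 + x^2) * (1 + y^2)) ^ (g/2) = (1+x^2)^(g/2) * (1+y^2)^(g/2) :=
    Real.mul_rpow (by positivity) (by positivity)
  rw [h3, h4] at h2
  rw [div_mul_div_comm, one_mul]
  apply one_div_le_one_div_of_le (by positivity) h2

lemma one_le_rpow_aux {x e : ℝ} (hx : 0 ≤ x) (he : 0 ≤ e) : 1 ≤ (1 + x) ^ e := by
  calc (1:ℝ) = 1 ^ e := (Real.one_rpow e).symm
    _ ≤ (1 + x) ^ e := Real.rpow_le_rpow (by norm_num) (by linarith) he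

lemma aux_k_bound {a : ℝ} (ha : 0 ≤ a) {x : ℝ} (hx : 1 ≤ x) :
    x * (1 / (1 + x ^ 2) ^ a) ≤ x ^ (1 - 2*a) := by
  have hx0 : 0 < x := lt_of_lt_of_le one_pos hx
  have h1 : ((x^2 : ℝ)) ^ a ≤ (1 + x^2) ^ a :=
    Real.rpow_le_rpow (by positivity) (by linarith) ha
  have h2 : ((x^2 : ℝ)) ^ a = x ^ (2*a) := by
    rw [← Real.rpow_natCast x 2, ← Real.rpow_mul hx0.le]
    norm_num
  have h3 : 1 / (1 + x^2) ^ a ≤ 1 / x ^ (2*a) := by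
    apply one_div_le_one_div_of_le (by rw [← h2]; positivity) (by rw [← h2]; exact h1)
  calc x * (1 / (1 + x^2) ^ a) ≤ x * (1 / x ^ (2*a)) :=
        mul_le_mul_of_nonneg_left h3 hx0.le
    _ = x ^ (1 - 2*a) := by
        rw [one_div, ← Real.rpow_neg hx0.le]
        nth_rewrite 1 [← Real.rpow_one x]
        rw [← Real.rpow_add hx0, show (1:ℝ) + -(2*a) = 1 - 2*a from by ring]

lemma ball_bound {a : ℝ} (ha : 0 < a) (ha1 : a < 1) :
    ∃ c : ℝ, 0 < c ∧ ∀ R : ℝ, 0 ≤ R →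
      Summable (fun l : ℤ × ℤ =>
        if Real.sqrt (latNormSq l) ≤ R then 1 / (1 + latNormSq l) ^ a else 0) ∧
      (∑' l : ℤ × ℤ, if Real.sqrt (latNormSq l) ≤ R then 1 / (1 + latNormSq l) ^ a else 0)
        ≤ c * (1 + R ^ 2) ^ (1 - a) := by
  set p : ℝ := 2 - 2*a with hp_def
  have hp : 0 < p := by rw [hp_def]; linarith
  refine ⟨1 + 8 * (1 + 2 / p), by positivity, ?_⟩
  intro R hR
  have hfnn : ∀ l : ℤ × ℤ,
      0 ≤ (if Real.sqrt (latNormSq l) ≤ R then 1 / (1 + latNormSq l) ^ a else 0) := by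
    intro l
    split
    · have := latNormSq_nonneg l; positivity
    · exact le_rfl
  have hsummable : Summable (fun l : ℤ × ℤ =>
      if Real.sqrt (latNormSq l) ≤ R then 1 / (1 + latNormSq l) ^ a else 0) := by
    apply summable_of_ne_finset_zero (s := latBox (Nat.ceil R))
    intro l hl
    have hlow := le_latNormSq_of_not_mem hl
    have hceil : R ≤ ((Nat.ceil R : ℕ) : ℝ) := Nat.le_ceil R
    have h2 : R ^ 2 < latNormSq l := by nlinarith
    rw [if_neg]
    rw [not_le]
    exact (Real.lt_sqrt hR).mpr h2
  refine ⟨hsummable, ?_⟩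
  set H : ℕ → ℝ := fun k => if (k:ℝ) ≤ R then 1 / (1 + (k:ℝ)^2) ^ a else 0 with hH_def
  have hH0 : ∀ k, 0 ≤ H k := by
    intro k; rw [hH_def]; dsimp only; split
    · positivity
    · exact le_rfl
  apply tsum_le_of_shell hfnn hsummable hH0
  · -- shell bound
    intro k l hk1 hk2
    by_cases h : Real.sqrt (latNormSq l) ≤ R
    · rw [if_pos h]
      have hkR : (k:ℝ) ≤ R := by
        refine le_trans ?_ h
        rw [Real.le_sqrt (by positivity) (latNormSq_nonneg l)]
        exact hk1
      rw [hH_def]; dsimp only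
      rw [if_pos hkR]
      apply one_div_le_one_div_of_le (by positivity)
      exact Real.rpow_le_rpow (by positivity) (by linarith) ha.le
    · rw [if_neg h]; exact hH0 k
  · -- sum bound
    intro M
    have hH00 : H 0 ≤ 1 := by
      rw [hH_def]; dsimp only
      split
      · norm_num
      · norm_num
    set n₀ : ℕ := Nat.floor R with hn0
    have hsum1 : ∑ k ∈ Icc 1 M, 8 * (k:ℝ) * H k
        ≤ ∑ k ∈ Icc 1 M, (if (k:ℝ) ≤ R then 8 * ((k:ℝ)) ^ (p - 1) else 0) := by
      apply Finset.sum_le_sum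
      intro k hk
      have hk1 : (1:ℝ) ≤ (k:ℝ) := by exact_mod_cast (Finset.mem_Icc.mp hk).1
      rw [hH_def]; dsimp only
      by_cases h : (k:ℝ) ≤ R
      · rw [if_pos h, if_pos h]
        have haux := aux_k_bound ha.le hk1
        have hpe : 1 - 2*a = p - 1 := by rw [hp_def]; ring
        rw [← hpe]
        calc 8 * (k:ℝ) * (if True then 1/(1+(k:ℝ)^2)^a else 0) = 8 * ((k:ℝ) * (1/(1+(k:ℝ)^2)^a)) := by rw [if_pos trivial]; ring
          _ ≤ 8 * ((k:ℝ)) ^ (1 - 2*a) := by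
              have := mul_le_mul_of_nonneg_left haux (by norm_num : (0:ℝ) ≤ 8)
              linarith
      · rw [if_neg h, if_neg h]
        simp
    have hsum2 : ∑ k ∈ Icc 1 M, (if (k:ℝ) ≤ R then 8 * ((k:ℝ)) ^ (p - 1) else 0)
        ≤ 8 * ∑ k ∈ Icc 1 n₀, ((k:ℝ)) ^ (p - 1) := by
      rw [← Finset.sum_filter, ← Finset.mul_sum]
      apply mul_le_mul_of_nonneg_left _ (by norm_num : (0:ℝ) ≤ 8)
      apply Finset.sum_le_sum_of_subset_of_nonneg
      · intro k hk
        rw [Finset.mem_filter, Finset.mem_Icc] at hk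
        rw [Finset.mem_Icc]
        exact ⟨hk.1.1, Nat.le_floor hk.2⟩
      · intro k _ _
        positivity
    have hL2 := L2 hp (by rw [hp_def]; linarith) n₀
    have hfloor : ((n₀:ℝ)) ^ p ≤ (1 + R ^ 2) ^ (1 - a) := by
      have h1 : ((n₀:ℝ)) ≤ R := Nat.floor_le hR
      have h2 : ((n₀:ℝ)) ^ p ≤ R ^ p := Real.rpow_le_rpow (by positivity) h1 hp.le
      have h3 : R ^ p = (R ^ 2) ^ (1 - a) := by
        rw [← Real.rpow_natCast R 2, ← Real.rpow_mul hR]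
        congr 1
        rw [hp_def]; push_cast; ring
      have h4 : ((R:ℝ) ^ 2) ^ (1-a) ≤ (1 + R ^ 2) ^ (1-a) :=
        Real.rpow_le_rpow (by positivity) (by linarith) (by linarith)
      rw [h3] at h2
      linarith
    have hone : 1 ≤ (1 + R ^ 2) ^ (1 - a) := one_le_rpow_aux (by positivity) (by linarith)
    have h2p : (0:ℝ) ≤ 1 + 2/p := by positivity
    calc H 0 + ∑ k ∈ Icc 1 M, 8 * (k:ℝ) * H k
        ≤ 1 + 8 * ((1 + 2/p) * ((n₀:ℝ)) ^ p) := by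
          have := le_trans hsum1 hsum2
          have h8 := mul_le_mul_of_nonneg_left hL2 (by norm_num : (0:ℝ) ≤ 8)
          linarith
      _ ≤ 1 + 8 * ((1 + 2/p) * (1 + R ^ 2) ^ (1 - a)) := by
          have := mul_le_mul_of_nonneg_left hfloor h2p
          nlinarith
      _ ≤ (1 + 8 * (1 + 2 / p)) * (1 + R ^ 2) ^ (1 - a) := by nlinarith [hone, h2p]

lemma tail_bound {g : ℝ} (hg : 1 < g) :
    ∃ c : ℝ, 0 < c ∧ ∀ R : ℝ, 0 ≤ R →
      Summable (fun l : ℤ × ℤ =>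
        if R < Real.sqrt (latNormSq l) then 1 / (1 + latNormSq l) ^ g else 0) ∧
      (∑' l : ℤ × ℤ, if R < Real.sqrt (latNormSq l) then 1 / (1 + latNormSq l) ^ g else 0)
        ≤ c * (1 + R ^ 2) ^ (1 - g) := by
  set q : ℝ := 2*g - 1 with hq_def
  have hq : 1 < q := by rw [hq_def]; linarith
  have hq1 : (0:ℝ) < q - 1 := by linarith
  have hcpos : (0:ℝ) < 8 * ((2:ℝ) ^ q / (q - 1)) * (4:ℝ) ^ (g-1) := by positivity
  refine ⟨_, hcpos, ?_⟩
  intro R hR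
  have hfnn : ∀ l : ℤ × ℤ,
      0 ≤ (if R < Real.sqrt (latNormSq l) then 1 / (1 + latNormSq l) ^ g else 0) := by
    intro l
    split
    · have := latNormSq_nonneg l; positivity
    · exact le_rfl
  have hsummable : Summable (fun l : ℤ × ℤ =>
      if R < Real.sqrt (latNormSq l) then 1 / (1 + latNormSq l) ^ g else 0) := by
    refine Summable.of_nonneg_of_le hfnn (fun l => ?_) (summable_g hg)
    split
    · exact le_rfl
    · have := latNormSq_nonneg l; positivity
  refine ⟨hsummable, ?_⟩
  set H : ℕ → ℝ := fun k => if R < Real.sqrt 2 * k then 1 / (1 + (k:ℝ)^2) ^ g else 0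
    with hH_def
  have hH0 : ∀ k, 0 ≤ H k := by
    intro k; rw [hH_def]; dsimp only; split
    · positivity
    · exact le_rfl
  apply tsum_le_of_shell hfnn hsummable hH0
  · intro k l hk1 hk2
    by_cases h : R < Real.sqrt (latNormSq l)
    · rw [if_pos h]
      have hsq : Real.sqrt (latNormSq l) ≤ Real.sqrt 2 * k := by
        have e : Real.sqrt 2 * k = Real.sqrt (2 * (k:ℝ)^2) := by
          rw [Real.sqrt_mul (by norm_num : (0:ℝ) ≤ 2), Real.sqrt_sq (by positivity : (0:ℝ) ≤ (k:ℝ))]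
        rw [e]
        exact Real.sqrt_le_sqrt hk2
      have hRk : R < Real.sqrt 2 * k := lt_of_lt_of_le h hsq
      rw [hH_def]; dsimp only
      rw [if_pos hRk]
      apply one_div_le_one_div_of_le (by positivity)
      exact Real.rpow_le_rpow (by positivity) (by linarith) (by linarith)
    · rw [if_neg h]; exact hH0 k
  · intro M
    have hsqrt2 : (0:ℝ) < Real.sqrt 2 := by positivity
    have hH00 : H 0 = 0 := by
      rw [hH_def]; dsimp only
      rw [if_neg]
      push_cast
      rw [mul_zero]
      exact not_lt.mpr hR
    set n₀ : ℕ := Nat.floor (R / Real.sqrt 2) + 1 with hn₀_def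
    have hn₀1 : 1 ≤ n₀ := by omega
    have hsum1 : ∑ k ∈ Icc 1 M, 8 * (k:ℝ) * H k
        ≤ ∑ k ∈ Icc 1 M, (if n₀ ≤ k then 8 * ((k:ℝ)) ^ (-q) else 0) := by
      apply Finset.sum_le_sum
      intro k hk
      have hk1 : (1:ℝ) ≤ (k:ℝ) := by exact_mod_cast (Finset.mem_Icc.mp hk).1
      rw [hH_def]; dsimp only
      by_cases h : R < Real.sqrt 2 * k
      · have hdiv : R / Real.sqrt 2 < (k:ℝ) := by
          rw [div_lt_iff₀ hsqrt2]
          calc R < Real.sqrt 2 * k := h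
            _ = (k:ℝ) * Real.sqrt 2 := by ring
        have hfloor : n₀ ≤ k := by
          have := (Nat.floor_lt (by positivity : (0:ℝ) ≤ R / Real.sqrt 2)).mpr hdiv
          omega
        rw [if_pos h, if_pos hfloor]
        have haux := aux_k_bound (by linarith : (0:ℝ) ≤ g) hk1
        have hpe : 1 - 2*g = -q := by rw [hq_def]; ring
        rw [← hpe]
        have := mul_le_mul_of_nonneg_left haux (by norm_num : (0:ℝ) ≤ 8)
        linarith
      · rw [if_neg h]
        rw [mul_zero]
        split
        · positivity
        · exact le_rfl
    have hsum2 : ∑ k ∈ Icc 1 M, (if n₀ ≤ k then 8 * ((k:ℝ)) ^ (-q) else 0)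
        ≤ 8 * ∑ k ∈ Icc n₀ M, ((k:ℝ)) ^ (-q) := by
      rw [← Finset.sum_filter, ← Finset.mul_sum]
      apply mul_le_mul_of_nonneg_left _ (by norm_num : (0:ℝ) ≤ 8)
      apply Finset.sum_le_sum_of_subset_of_nonneg
      · intro k hk
        rw [Finset.mem_filter, Finset.mem_Icc] at hk
        rw [Finset.mem_Icc]
        exact ⟨hk.2, hk.1.2⟩
      · intro k _ _
        positivity
    have hL1 := L1 hq n₀ M hn₀1
    have hn₀R : R / Real.sqrt 2 < (n₀:ℝ) := by
      rw [hn₀_def]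
      push_cast
      exact Nat.lt_floor_add_one _
    have hRn : R < Real.sqrt 2 * n₀ := by
      rw [div_lt_iff₀ hsqrt2] at hn₀R
      calc R < (n₀:ℝ) * Real.sqrt 2 := hn₀R
        _ = Real.sqrt 2 * n₀ := by ring
    have hsq2 : (Real.sqrt 2) ^ 2 = 2 := Real.sq_sqrt (by norm_num)
    have hquarter : (1 + R ^ 2) / 4 ≤ ((n₀:ℝ)) ^ 2 := by
      have h1 : R ^ 2 < 2 * ((n₀:ℝ)) ^ 2 := by nlinarith [hRn, hR, hsq2]
      have h2 : (1:ℝ) ≤ ((n₀:ℝ)) ^ 2 := by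
        have : (1:ℝ) ≤ (n₀:ℝ) := by exact_mod_cast hn₀1
        nlinarith
      nlinarith
    have hkey : ((n₀:ℝ)) ^ ((1:ℝ) - q) ≤ (4:ℝ) ^ (g-1) * (1 + R ^ 2) ^ (1 - g) := by
      have e1 : ((n₀:ℝ)) ^ ((1:ℝ) - q) = (((n₀:ℝ)) ^ 2) ^ (1 - g) := by
        rw [← Real.rpow_natCast ((n₀:ℝ)) 2, ← Real.rpow_mul (by positivity)]
        congr 1
        rw [hq_def]; push_cast; ring
      have e2 : ((((n₀:ℝ))) ^ 2) ^ (1 - g) ≤ ((1 + R ^ 2)/4) ^ (1 - g) :=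
        Real.rpow_le_rpow_of_nonpos (by positivity) hquarter (by linarith)
      have e3 : ((1 + R ^ 2)/4 : ℝ) ^ (1 - g) = (1 + R ^ 2) ^ (1-g) * (4:ℝ) ^ (g-1) := by
        rw [Real.div_rpow (by positivity) (by norm_num : (0:ℝ) ≤ 4)]
        rw [div_eq_mul_inv, ← Real.rpow_neg (by norm_num : (0:ℝ) ≤ 4)]
        rw [show -(1-g) = g - 1 from by ring]
      rw [e1]
      rw [e3] at e2
      linarith [e2]
    calc H 0 + ∑ k ∈ Icc 1 M, 8 * (k:ℝ) * H k
        ≤ 0 + 8 * ((2:ℝ) ^ q / (q-1) * ((n₀:ℝ)) ^ ((1:ℝ) - q)) := by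
          rw [hH00]
          have h8 := mul_le_mul_of_nonneg_left hL1 (by norm_num : (0:ℝ) ≤ 8)
          linarith [le_trans hsum1 hsum2]
      _ ≤ 8 * ((2:ℝ) ^ q / (q-1)) * ((4:ℝ) ^ (g-1) * (1 + R ^ 2) ^ (1 - g)) := by
          have hc2 : (0:ℝ) ≤ (2:ℝ) ^ q / (q-1) := by positivity
          have := mul_le_mul_of_nonneg_left hkey hc2
          nlinarith
      _ = (8 * ((2:ℝ) ^ q / (q - 1)) * (4:ℝ) ^ (g-1)) * (1 + R ^ 2) ^ (1 - g) := by ring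

lemma latNormSq_neg (l : ℤ × ℤ) : latNormSq (-l) = latNormSq l := by
  unfold latNormSq
  simp only [Prod.fst_neg, Prod.snd_neg]
  push_cast
  ring

lemma lat_triangle (a b : ℤ × ℤ) :
    Real.sqrt (latNormSq (a + b)) ≤ Real.sqrt (latNormSq a) + Real.sqrt (latNormSq b) := by
  set A := latNormSq a with hA
  set B := latNormSq b with hB
  have hA0 : 0 ≤ A := latNormSq_nonneg a
  have hB0 : 0 ≤ B := latNormSq_nonneg b
  have hdot : (a.1:ℝ) * b.1 + (a.2:ℝ) * b.2 ≤ Real.sqrt A * Real.sqrt B := by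
    rw [← Real.sqrt_mul hA0]
    apply Real.le_sqrt_of_sq_le
    have : A * B - ((a.1:ℝ) * b.1 + (a.2:ℝ) * b.2)^2 =
        ((a.1:ℝ) * b.2 - (a.2:ℝ) * b.1)^2 := by
      rw [hA, hB]; unfold latNormSq; ring
    nlinarith [sq_nonneg ((a.1:ℝ) * b.2 - (a.2:ℝ) * b.1)]
  rw [Real.sqrt_le_iff]
  constructor
  · positivity
  · have hsqA : Real.sqrt A ^ 2 = A := Real.sq_sqrt hA0
    have hsqB : Real.sqrt B ^ 2 = B := Real.sq_sqrt hB0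
    have hnorm : latNormSq (a + b) =
        A + B + 2 * ((a.1:ℝ) * b.1 + (a.2:ℝ) * b.2) := by
      rw [hA, hB]; unfold latNormSq
      simp only [Prod.fst_add, Prod.snd_add]
      push_cast
      ring
    rw [hnorm]
    nlinarith [hdot]

lemma inv_rpow_mono {e t u : ℝ} (he : 0 ≤ e) (hu : 0 ≤ u) (h : u ≤ t) :
    1 / (1 + t) ^ e ≤ 1 / (1 + u) ^ e := by
  apply one_div_le_one_div_of_le (by positivity)
  exact Real.rpow_le_rpow (by linarith) (by linarith) he

lemma inv_rpow_quarter {e t u : ℝ} (he : 0 ≤ e) (hu : 0 ≤ u) (h : (1 + u) / 4 ≤ 1 + t) :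
    1 / (1 + t) ^ e ≤ (4:ℝ) ^ e * (1 / (1 + u) ^ e) := by
  have h0 : (0:ℝ) < (1 + u) / 4 := by linarith
  have h1 : ((1 + u) / 4) ^ e ≤ (1 + t) ^ e :=
    Real.rpow_le_rpow h0.le h (by linarith)
  have h2 : ((1 + u) / 4 : ℝ) ^ e = (1 + u) ^ e / (4:ℝ) ^ e :=
    Real.div_rpow (show (0:ℝ) ≤ 1 + u by linarith) (show (0:ℝ) ≤ 4 by norm_num) e
  have h3 : 1 / (1 + t) ^ e ≤ 1 / (((1 + u)) ^ e / (4:ℝ) ^ e) := by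
    apply one_div_le_one_div_of_le
    · rw [← h2]; positivity
    · rw [← h2]; exact h1
  calc 1 / (1 + t) ^ e ≤ 1 / (((1 + u)) ^ e / (4:ℝ) ^ e) := h3
    _ = (4:ℝ) ^ e * (1 / (1 + u) ^ e) := by
        rw [one_div_div]
        ring

lemma sqrt_four_mul {x : ℝ} (hx : 0 ≤ x) : Real.sqrt (4 * x) = 2 * Real.sqrt x := by
  rw [show (4:ℝ) = 2^2 by norm_num, Real.sqrt_mul (by positivity), Real.sqrt_sq (by norm_num : (0:ℝ) ≤ 2)]

lemma combine_rpow {x e1 e2 : ℝ} (hx : 0 < x) : (1 / x ^ e1) * x ^ e2 = x ^ (e2 - e1) := by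
  rw [one_div, ← Real.rpow_neg hx.le, ← Real.rpow_add hx,
    show -e1 + e2 = e2 - e1 from by ring]


lemma frac_mul {x e1 e2 : ℝ} (hx : 0 < x) : (1 / x ^ e1) * (1 / x ^ e2) = 1 / x ^ (e1 + e2) := by
  rw [div_mul_div_comm, one_mul, ← Real.rpow_add hx]

set_option maxHeartbeats 1000000 in
/-- Lemma A.2, second part: estimate for the truncated convolution on `ℤ²`. -/
theorem discrete_convolution_truncation_estimate
    (α β C : ℝ) (hα : α ∈ Set.Ioo (0:ℝ) 1) (hβ : β ∈ Set.Ioo (0:ℝ) 1)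
    (hαβ : 1 < α + β) (hC : 0 < C)
    (K₁ K₂ : ℤ × ℤ → ℝ)
    (hK₁0 : ∀ m, 0 ≤ K₁ m) (hK₂0 : ∀ m, 0 ≤ K₂ m)
    (hK₁sym : ∀ m, K₁ (-m) = K₁ m) (hK₂sym : ∀ m, K₂ (-m) = K₂ m)
    (hK₁ : ∀ m, K₁ m ≤ C / (1 + latNormSq m) ^ α)
    (hK₂ : ∀ m, K₂ m ≤ C / (1 + latNormSq m) ^ β) :
    ∃ C' : ℝ, 0 < C' ∧ ∀ (m : ℤ × ℤ) (N : ℕ),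
      |(∑' l : ℤ × ℤ, K₁ (m - l) * K₂ l) -
        (∑' l : ℤ × ℤ, K₁ (m - l) * (if Real.sqrt (latNormSq l) ≤ N then K₂ l else 0))|
        ≤ C' / (1 + (max (Real.sqrt (latNormSq m)) (N : ℝ)) ^ 2) ^ (α + β - 1) := by
  obtain ⟨hα0, hα1⟩ := hα
  obtain ⟨hβ0, hβ1⟩ := hβ
  obtain ⟨cα, hcα, hballα⟩ := ball_bound hα0 hα1
  obtain ⟨cβ, hcβ, hballβ⟩ := ball_bound hβ0 hβ1
  obtain ⟨cγ, hcγ, htailγ⟩ := tail_bound hαβ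
  refine ⟨C^2 * ((4:ℝ)^α * cβ + 4 * (4:ℝ)^β * cα + (4:ℝ)^β * cγ + (4:ℝ)^α * cγ + cα) + 1,
    by positivity, ?_⟩
  intro m N
  have hfrac : ∀ (x : ℤ × ℤ) (e : ℝ), 0 ≤ 1 / (1 + latNormSq x) ^ e := by
    intro x e
    have := latNormSq_nonneg x
    positivity
  have hgpos : ∀ x : ℤ × ℤ, (0:ℝ) < 1 + latNormSq x := by
    intro x; have := latNormSq_nonneg x; linarith
  have hP0 : ∀ l : ℤ × ℤ, 0 ≤ K₁ (m - l) * K₂ l := fun l => mul_nonneg (hK₁0 _) (hK₂0 _)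
  have hprod : ∀ l : ℤ × ℤ, K₁ (m - l) * K₂ l ≤
      C^2 * ((1 / (1 + latNormSq (m - l)) ^ α) * (1 / (1 + latNormSq l) ^ β)) := by
    intro l
    have h1 : K₁ (m - l) ≤ C * (1 / (1 + latNormSq (m - l)) ^ α) := by
      rw [mul_one_div]; exact hK₁ _
    have h2 : K₂ l ≤ C * (1 / (1 + latNormSq l) ^ β) := by
      rw [mul_one_div]; exact hK₂ _
    calc K₁ (m - l) * K₂ l
        ≤ (C * (1 / (1 + latNormSq (m - l)) ^ α)) * (C * (1 / (1 + latNormSq l) ^ β)) :=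
          mul_le_mul h1 h2 (hK₂0 l) (mul_nonneg hC.le (hfrac _ _))
      _ = C^2 * ((1 / (1 + latNormSq (m - l)) ^ α) * (1 / (1 + latNormSq l) ^ β)) := by ring
  have hsg := summable_g hαβ
  have hsgm : Summable (fun l : ℤ × ℤ => 1 / (1 + latNormSq (m - l)) ^ (α + β)) := by
    have h := ((Equiv.subLeft m).summable_iff
      (f := fun l : ℤ × ℤ => 1 / (1 + latNormSq l) ^ (α + β))).mpr hsg
    exact h.congr (fun l => by simp [Function.comp, Equiv.subLeft_apply])
  have hPsumBound : ∀ l : ℤ × ℤ, K₁ (m - l) * K₂ l ≤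
      C^2 * (1 / (1 + latNormSq l) ^ (α + β)) +
      C^2 * (1 / (1 + latNormSq (m - l)) ^ (α + β)) := by
    intro l
    rcases le_total (latNormSq l) (latNormSq (m - l)) with h | h
    · have h1 : 1 / (1 + latNormSq (m - l)) ^ α ≤ 1 / (1 + latNormSq l) ^ α :=
        inv_rpow_mono hα0.le (latNormSq_nonneg l) h
      have h2 := mul_le_mul_of_nonneg_right h1 (hfrac l β)
      have h3 := mul_le_mul_of_nonneg_left h2 (sq_nonneg C)
      calc K₁ (m - l) * K₂ l
          ≤ C^2 * ((1 / (1 + latNormSq (m - l)) ^ α) * (1 / (1 + latNormSq l) ^ β)) := hprod l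
        _ ≤ C^2 * ((1 / (1 + latNormSq l) ^ α) * (1 / (1 + latNormSq l) ^ β)) := by
            calc C^2 * ((1 / (1 + latNormSq (m - l)) ^ α) * (1 / (1 + latNormSq l) ^ β))
                = C^2 * (1 / (1 + latNormSq (m - l)) ^ α * (1 / (1 + latNormSq l) ^ β)) := by ring
              _ ≤ C^2 * (1 / (1 + latNormSq l) ^ α * (1 / (1 + latNormSq l) ^ β)) := h3
        _ = C^2 * (1 / (1 + latNormSq l) ^ (α + β)) := by rw [frac_mul (hgpos l)]
        _ ≤ _ := le_add_of_nonneg_right (mul_nonneg (sq_nonneg C) (hfrac _ _))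
    · have h1 : 1 / (1 + latNormSq l) ^ β ≤ 1 / (1 + latNormSq (m - l)) ^ β :=
        inv_rpow_mono hβ0.le (latNormSq_nonneg (m - l)) h
      have h2 := mul_le_mul_of_nonneg_left h1 (hfrac (m - l) α)
      have h3 := mul_le_mul_of_nonneg_left h2 (sq_nonneg C)
      calc K₁ (m - l) * K₂ l
          ≤ C^2 * ((1 / (1 + latNormSq (m - l)) ^ α) * (1 / (1 + latNormSq l) ^ β)) := hprod l
        _ ≤ C^2 * ((1 / (1 + latNormSq (m - l)) ^ α) * (1 / (1 + latNormSq (m - l)) ^ β)) := h3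
        _ = C^2 * (1 / (1 + latNormSq (m - l)) ^ (α + β)) := by rw [frac_mul (hgpos (m - l))]
        _ ≤ _ := le_add_of_nonneg_left (mul_nonneg (sq_nonneg C) (hfrac _ _))
  have hPsum : Summable (fun l : ℤ × ℤ => K₁ (m - l) * K₂ l) :=
    Summable.of_nonneg_of_le hP0 hPsumBound ((hsg.mul_left _).add (hsgm.mul_left _))
  set Q : ℤ × ℤ → ℝ :=
    fun l => K₁ (m - l) * (if Real.sqrt (latNormSq l) ≤ (N:ℝ) then K₂ l else 0) with hQ_def
  set T : ℤ × ℤ → ℝ :=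
    fun l => if Real.sqrt (latNormSq l) ≤ (N:ℝ) then 0 else K₁ (m - l) * K₂ l with hT_def
  have hQ0 : ∀ l, 0 ≤ Q l := by
    intro l; rw [hQ_def]; dsimp only
    apply mul_nonneg (hK₁0 _)
    split
    · exact hK₂0 l
    · exact le_rfl
  have hT0 : ∀ l, 0 ≤ T l := by
    intro l; rw [hT_def]; dsimp only
    split
    · exact le_rfl
    · exact hP0 l
  have hQleP : ∀ l, Q l ≤ K₁ (m - l) * K₂ l := by
    intro l; rw [hQ_def]; dsimp only
    split
    · exact le_rfl
    · rw [mul_zero]; exact hP0 l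
  have hTleP : ∀ l, T l ≤ K₁ (m - l) * K₂ l := by
    intro l; rw [hT_def]; dsimp only
    split
    · exact hP0 l
    · exact le_rfl
  have hQsum : Summable Q := Summable.of_nonneg_of_le hQ0 hQleP hPsum
  have hTsum : Summable T := Summable.of_nonneg_of_le hT0 hTleP hPsum
  have hPQT : (∑' l, K₁ (m - l) * K₂ l) = (∑' l, Q l) + (∑' l, T l) := by
    rw [← hQsum.tsum_add hTsum]
    apply tsum_congr
    intro l
    rw [hQ_def, hT_def]; dsimp only
    split
    · ring
    · ring
  have habs : |(∑' l : ℤ × ℤ, K₁ (m - l) * K₂ l) -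
      (∑' l : ℤ × ℤ, K₁ (m - l) * (if Real.sqrt (latNormSq l) ≤ (N:ℝ) then K₂ l else 0))|
      = ∑' l, T l := by
    rw [hPQT, add_sub_cancel_left]
    exact abs_of_nonneg (tsum_nonneg hT0)
  rw [habs]
  rcases le_total (N:ℝ) (Real.sqrt (latNormSq m)) with hcase | hcase
  · rw [max_eq_left hcase, Real.sq_sqrt (latNormSq_nonneg m)]
    have hM20 : (0:ℝ) ≤ latNormSq m := latNormSq_nonneg m
    have hsqM2 : Real.sqrt (latNormSq m) ^ 2 = latNormSq m := Real.sq_sqrt hM20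
    have hsqM2nn : (0:ℝ) ≤ Real.sqrt (latNormSq m) := Real.sqrt_nonneg _
    have h4nn : ∀ e : ℝ, (0:ℝ) ≤ (4:ℝ) ^ e := fun e => Real.rpow_nonneg (by norm_num) e
    set F1 : ℤ × ℤ → ℝ := fun l => (C^2 * (4:ℝ)^α * (1 / (1 + latNormSq m) ^ α)) *
      (if Real.sqrt (latNormSq l) ≤ Real.sqrt (latNormSq m)
        then 1 / (1 + latNormSq l) ^ β else 0) with hF1
    set F2 : ℤ × ℤ → ℝ := fun l => (C^2 * (4:ℝ)^β * (1 / (1 + latNormSq m) ^ β)) *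
      (if Real.sqrt (latNormSq (m - l)) ≤ 2 * Real.sqrt (latNormSq m)
        then 1 / (1 + latNormSq (m - l)) ^ α else 0) with hF2
    set F3 : ℤ × ℤ → ℝ := fun l => (C^2 * (4:ℝ)^β) *
      (if Real.sqrt (latNormSq m) < Real.sqrt (latNormSq (m - l))
        then 1 / (1 + latNormSq (m - l)) ^ (α + β) else 0) with hF3
    have hco1 : (0:ℝ) ≤ C^2 * (4:ℝ)^α * (1 / (1 + latNormSq m) ^ α) :=
      mul_nonneg (mul_nonneg (sq_nonneg C) (h4nn α)) (hfrac m α)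
    have hco2 : (0:ℝ) ≤ C^2 * (4:ℝ)^β * (1 / (1 + latNormSq m) ^ β) :=
      mul_nonneg (mul_nonneg (sq_nonneg C) (h4nn β)) (hfrac m β)
    have hco3 : (0:ℝ) ≤ C^2 * (4:ℝ)^β := mul_nonneg (sq_nonneg C) (h4nn β)
    have hF1nn : ∀ l, 0 ≤ F1 l := by
      intro l; rw [hF1]; dsimp only
      apply mul_nonneg hco1
      split
      · exact hfrac _ _
      · exact le_rfl
    have hF2nn : ∀ l, 0 ≤ F2 l := by
      intro l; rw [hF2]; dsimp only
      apply mul_nonneg hco2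
      split
      · exact hfrac _ _
      · exact le_rfl
    have hF3nn : ∀ l, 0 ≤ F3 l := by
      intro l; rw [hF3]; dsimp only
      apply mul_nonneg hco3
      split
      · exact hfrac _ _
      · exact le_rfl
    have hpt : ∀ l, T l ≤ F1 l + F2 l + F3 l := by
      intro l
      have hTP := hTleP l
      by_cases h1 : 4 * latNormSq l ≤ latNormSq m
      · -- near--origin region: F1 dominates
        have hc : K₁ (m - l) * K₂ l ≤ F1 l := by
          have hind : Real.sqrt (latNormSq l) ≤ Real.sqrt (latNormSq m) :=
            Real.sqrt_le_sqrt (by linarith [latNormSq_nonneg l])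
          have htri : Real.sqrt (latNormSq m)
              ≤ Real.sqrt (latNormSq (m - l)) + Real.sqrt (latNormSq l) := by
            have h := lat_triangle (m - l) l
            rw [sub_add_cancel] at h
            exact h
          have hhalf : Real.sqrt (latNormSq l) ≤ Real.sqrt (latNormSq m) / 2 := by
            have h4 : Real.sqrt (4 * latNormSq l) ≤ Real.sqrt (latNormSq m) :=
              Real.sqrt_le_sqrt h1
            rw [sqrt_four_mul (latNormSq_nonneg l)] at h4
            linarith
          have hlow : latNormSq m / 4 ≤ latNormSq (m - l) := by
            have h5 : Real.sqrt (latNormSq m) / 2 ≤ Real.sqrt (latNormSq (m - l)) := by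
              linarith
            have h6 := Real.sq_sqrt (latNormSq_nonneg (m - l))
            have h7 := Real.sq_sqrt (latNormSq_nonneg m)
            nlinarith [Real.sqrt_nonneg (latNormSq m), Real.sqrt_nonneg (latNormSq (m - l))]
          have hquarter : (1 + latNormSq m) / 4 ≤ 1 + latNormSq (m - l) := by linarith
          have hK1b : K₁ (m - l) ≤ C * ((4:ℝ)^α * (1 / (1 + latNormSq m) ^ α)) := by
            calc K₁ (m - l) ≤ C * (1 / (1 + latNormSq (m - l)) ^ α) := by
                  rw [mul_one_div]; exact hK₁ _
              _ ≤ C * ((4:ℝ)^α * (1 / (1 + latNormSq m) ^ α)) :=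
                  mul_le_mul_of_nonneg_left
                    (inv_rpow_quarter hα0.le (latNormSq_nonneg m) hquarter) hC.le
          rw [hF1]; dsimp only
          rw [if_pos hind]
          calc K₁ (m - l) * K₂ l
              ≤ (C * ((4:ℝ)^α * (1 / (1 + latNormSq m) ^ α))) *
                  (C * (1 / (1 + latNormSq l) ^ β)) :=
                mul_le_mul hK1b (by rw [mul_one_div]; exact hK₂ l) (hK₂0 l)
                  (mul_nonneg hC.le (mul_nonneg (h4nn α) (hfrac m α)))
            _ = (C^2 * (4:ℝ)^α * (1 / (1 + latNormSq m) ^ α)) *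
                  (1 / (1 + latNormSq l) ^ β) := by ring
        linarith [hF2nn l, hF3nn l]
      · push_neg at h1
        by_cases h2 : latNormSq (m - l) ≤ 4 * latNormSq m
        · -- middle region: F2 dominates
          have hc : K₁ (m - l) * K₂ l ≤ F2 l := by
            have hquarter : (1 + latNormSq m) / 4 ≤ 1 + latNormSq l := by
              have := latNormSq_nonneg l
              linarith
            have hK2b : K₂ l ≤ C * ((4:ℝ)^β * (1 / (1 + latNormSq m) ^ β)) := by
              calc K₂ l ≤ C * (1 / (1 + latNormSq l) ^ β) := by
                    rw [mul_one_div]; exact hK₂ _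
                _ ≤ C * ((4:ℝ)^β * (1 / (1 + latNormSq m) ^ β)) :=
                    mul_le_mul_of_nonneg_left
                      (inv_rpow_quarter hβ0.le (latNormSq_nonneg m) hquarter) hC.le
            have hind : Real.sqrt (latNormSq (m - l)) ≤ 2 * Real.sqrt (latNormSq m) := by
              have h4 : Real.sqrt (latNormSq (m - l)) ≤ Real.sqrt (4 * latNormSq m) :=
                Real.sqrt_le_sqrt h2
              rw [sqrt_four_mul (latNormSq_nonneg m)] at h4
              exact h4
            rw [hF2]; dsimp only
            rw [if_pos hind]
            calc K₁ (m - l) * K₂ l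
                ≤ (C * (1 / (1 + latNormSq (m - l)) ^ α)) *
                    (C * ((4:ℝ)^β * (1 / (1 + latNormSq m) ^ β))) :=
                  mul_le_mul (by rw [mul_one_div]; exact hK₁ _) hK2b (hK₂0 l)
                    (mul_nonneg hC.le (hfrac _ _))
              _ = (C^2 * (4:ℝ)^β * (1 / (1 + latNormSq m) ^ β)) *
                    (1 / (1 + latNormSq (m - l)) ^ α) := by ring
          linarith [hF1nn l, hF3nn l]
        · -- far region: F3 dominates
          push_neg at h2
          have hc : K₁ (m - l) * K₂ l ≤ F3 l := by
            have hind : Real.sqrt (latNormSq m) < Real.sqrt (latNormSq (m - l)) :=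
              Real.sqrt_lt_sqrt (latNormSq_nonneg m) (by linarith)
            have htri : Real.sqrt (latNormSq (m - l))
                ≤ Real.sqrt (latNormSq m) + Real.sqrt (latNormSq l) := by
              have h := lat_triangle m (-l)
              rw [← sub_eq_add_neg, latNormSq_neg] at h
              exact h
            have h2m : 2 * Real.sqrt (latNormSq m) ≤ Real.sqrt (latNormSq (m - l)) := by
              have h4 : Real.sqrt (4 * latNormSq m) ≤ Real.sqrt (latNormSq (m - l)) :=
                Real.sqrt_le_sqrt (by linarith)
              rw [sqrt_four_mul (latNormSq_nonneg m)] at h4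
              exact h4
            have hs_low : Real.sqrt (latNormSq (m - l)) / 2 ≤ Real.sqrt (latNormSq l) := by
              linarith
            have hslow : latNormSq (m - l) / 4 ≤ latNormSq l := by
              have h6 := Real.sq_sqrt (latNormSq_nonneg (m - l))
              have h7 := Real.sq_sqrt (latNormSq_nonneg l)
              nlinarith [Real.sqrt_nonneg (latNormSq (m - l)), Real.sqrt_nonneg (latNormSq l)]
            have hquarter : (1 + latNormSq (m - l)) / 4 ≤ 1 + latNormSq l := by linarith
            have hK2b : K₂ l ≤ C * ((4:ℝ)^β * (1 / (1 + latNormSq (m - l)) ^ β)) := by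
              calc K₂ l ≤ C * (1 / (1 + latNormSq l) ^ β) := by
                    rw [mul_one_div]; exact hK₂ _
                _ ≤ C * ((4:ℝ)^β * (1 / (1 + latNormSq (m - l)) ^ β)) :=
                    mul_le_mul_of_nonneg_left
                      (inv_rpow_quarter hβ0.le (latNormSq_nonneg (m - l)) hquarter) hC.le
            rw [hF3]; dsimp only
            rw [if_pos hind]
            calc K₁ (m - l) * K₂ l
                ≤ (C * (1 / (1 + latNormSq (m - l)) ^ α)) *
                    (C * ((4:ℝ)^β * (1 / (1 + latNormSq (m - l)) ^ β))) :=
                  mul_le_mul (by rw [mul_one_div]; exact hK₁ _) hK2b (hK₂0 l)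
                    (mul_nonneg hC.le (hfrac _ _))
              _ = (C^2 * (4:ℝ)^β) *
                    ((1 / (1 + latNormSq (m - l)) ^ α) * (1 / (1 + latNormSq (m - l)) ^ β)) := by
                  ring
              _ = (C^2 * (4:ℝ)^β) * (1 / (1 + latNormSq (m - l)) ^ (α + β)) := by
                  rw [frac_mul (hgpos (m - l))]
          linarith [hF1nn l, hF2nn l]
    -- summability and tsum bounds for F1, F2, F3
    obtain ⟨hbβ_sum, hbβ_le⟩ := hballβ (Real.sqrt (latNormSq m)) hsqM2nn
    obtain ⟨hbα_sum, hbα_le⟩ := hballα (2 * Real.sqrt (latNormSq m)) (by positivity)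
    obtain ⟨htl_sum, htl_le⟩ := htailγ (Real.sqrt (latNormSq m)) hsqM2nn
    rw [hsqM2] at hbβ_le htl_le
    have h2sq : (2 * Real.sqrt (latNormSq m)) ^ 2 = 4 * latNormSq m := by
      rw [mul_pow, hsqM2]; norm_num
    rw [h2sq] at hbα_le
    have hF1sum : Summable F1 := by
      rw [hF1]; exact hbβ_sum.mul_left _
    have hre2 : Summable (fun l : ℤ × ℤ =>
        if Real.sqrt (latNormSq (m - l)) ≤ 2 * Real.sqrt (latNormSq m)
          then 1 / (1 + latNormSq (m - l)) ^ α else 0) := by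
      have h := ((Equiv.subLeft m).summable_iff (f := fun l : ℤ × ℤ =>
        if Real.sqrt (latNormSq l) ≤ 2 * Real.sqrt (latNormSq m)
          then 1 / (1 + latNormSq l) ^ α else 0)).mpr hbα_sum
      exact h.congr (fun l => by simp [Function.comp, Equiv.subLeft_apply])
    have hF2sum : Summable F2 := by
      rw [hF2]; exact hre2.mul_left _
    have hre3 : Summable (fun l : ℤ × ℤ =>
        if Real.sqrt (latNormSq m) < Real.sqrt (latNormSq (m - l))
          then 1 / (1 + latNormSq (m - l)) ^ (α + β) else 0) := by
      have h := ((Equiv.subLeft m).summable_iff (f := fun l : ℤ × ℤ =>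
        if Real.sqrt (latNormSq m) < Real.sqrt (latNormSq l)
          then 1 / (1 + latNormSq l) ^ (α + β) else 0)).mpr htl_sum
      exact h.congr (fun l => by simp [Function.comp, Equiv.subLeft_apply])
    have hF3sum : Summable F3 := by
      rw [hF3]; exact hre3.mul_left _
    have hre2t : (∑' l : ℤ × ℤ,
        if Real.sqrt (latNormSq (m - l)) ≤ 2 * Real.sqrt (latNormSq m)
          then 1 / (1 + latNormSq (m - l)) ^ α else 0)
        = ∑' l : ℤ × ℤ, (if Real.sqrt (latNormSq l) ≤ 2 * Real.sqrt (latNormSq m)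
          then 1 / (1 + latNormSq l) ^ α else 0) := by
      rw [← (Equiv.subLeft m).tsum_eq (f := fun l : ℤ × ℤ =>
        if Real.sqrt (latNormSq l) ≤ 2 * Real.sqrt (latNormSq m)
          then 1 / (1 + latNormSq l) ^ α else 0)]
      exact tsum_congr (fun l => by rw [Equiv.subLeft_apply])
    have hre3t : (∑' l : ℤ × ℤ,
        if Real.sqrt (latNormSq m) < Real.sqrt (latNormSq (m - l))
          then 1 / (1 + latNormSq (m - l)) ^ (α + β) else 0)
        = ∑' l : ℤ × ℤ, (if Real.sqrt (latNormSq m) < Real.sqrt (latNormSq l)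
          then 1 / (1 + latNormSq l) ^ (α + β) else 0) := by
      rw [← (Equiv.subLeft m).tsum_eq (f := fun l : ℤ × ℤ =>
        if Real.sqrt (latNormSq m) < Real.sqrt (latNormSq l)
          then 1 / (1 + latNormSq l) ^ (α + β) else 0)]
      exact tsum_congr (fun l => by rw [Equiv.subLeft_apply])
    have hT_le : ∑' l, T l ≤ (∑' l, F1 l) + (∑' l, F2 l) + (∑' l, F3 l) := by
      calc ∑' l, T l ≤ ∑' l, (F1 l + F2 l + F3 l) :=
            hTsum.tsum_le_tsum hpt ((hF1sum.add hF2sum).add hF3sum)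
        _ = (∑' l, F1 l) + (∑' l, F2 l) + (∑' l, F3 l) := by
            rw [(hF1sum.add hF2sum).tsum_add hF3sum, hF1sum.tsum_add hF2sum]
    have ht1 : (∑' l, F1 l) ≤ (C^2 * (4:ℝ)^α * (1 / (1 + latNormSq m) ^ α)) *
        (cβ * (1 + latNormSq m) ^ (1 - β)) := by
      rw [hF1, tsum_mul_left]
      exact mul_le_mul_of_nonneg_left hbβ_le hco1
    have ht2 : (∑' l, F2 l) ≤ (C^2 * (4:ℝ)^β * (1 / (1 + latNormSq m) ^ β)) *
        (cα * (1 + 4 * latNormSq m) ^ (1 - α)) := by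
      rw [hF2, tsum_mul_left, hre2t]
      exact mul_le_mul_of_nonneg_left hbα_le hco2
    have ht3 : (∑' l, F3 l) ≤ (C^2 * (4:ℝ)^β) *
        (cγ * (1 + latNormSq m) ^ (1 - (α + β))) := by
      rw [hF3, tsum_mul_left, hre3t]
      exact mul_le_mul_of_nonneg_left htl_le hco3
    -- combine the powers
    have hx : (0:ℝ) < 1 + latNormSq m := hgpos m
    have hc1' : (C^2 * (4:ℝ)^α * (1 / (1 + latNormSq m) ^ α)) *
        (cβ * (1 + latNormSq m) ^ (1 - β))
        = C^2 * (4:ℝ)^α * cβ * (1 + latNormSq m) ^ (1 - (α + β)) := by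
      have := combine_rpow (e1 := α) (e2 := 1 - β) hx
      calc (C^2 * (4:ℝ)^α * (1 / (1 + latNormSq m) ^ α)) * (cβ * (1 + latNormSq m) ^ (1 - β))
          = C^2 * (4:ℝ)^α * cβ *
            ((1 / (1 + latNormSq m) ^ α) * (1 + latNormSq m) ^ (1 - β)) := by ring
        _ = C^2 * (4:ℝ)^α * cβ * (1 + latNormSq m) ^ (1 - β - α) := by rw [this]
        _ = C^2 * (4:ℝ)^α * cβ * (1 + latNormSq m) ^ (1 - (α + β)) := by
            rw [show 1 - β - α = 1 - (α + β) from by ring]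
    have h4x : (1 + 4 * latNormSq m : ℝ) ^ (1 - α) ≤ 4 * (1 + latNormSq m) ^ (1 - α) := by
      have ha : (1 + 4 * latNormSq m : ℝ) ≤ 4 * (1 + latNormSq m) := by linarith
      calc (1 + 4 * latNormSq m : ℝ) ^ (1 - α) ≤ (4 * (1 + latNormSq m)) ^ (1 - α) :=
            Real.rpow_le_rpow (by linarith) ha (by linarith)
        _ = (4:ℝ) ^ (1 - α) * (1 + latNormSq m) ^ (1 - α) :=
            Real.mul_rpow (by norm_num) hx.le
        _ ≤ 4 * (1 + latNormSq m) ^ (1 - α) := by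
            apply mul_le_mul_of_nonneg_right _ (Real.rpow_nonneg hx.le _)
            calc (4:ℝ) ^ (1 - α) ≤ (4:ℝ) ^ (1:ℝ) :=
                  Real.rpow_le_rpow_of_exponent_le (by norm_num) (by linarith)
              _ = 4 := Real.rpow_one 4
    have hc2' : (C^2 * (4:ℝ)^β * (1 / (1 + latNormSq m) ^ β)) *
        (cα * (1 + 4 * latNormSq m) ^ (1 - α))
        ≤ C^2 * (4:ℝ)^β * cα * 4 * (1 + latNormSq m) ^ (1 - (α + β)) := by
      have hstep : (C^2 * (4:ℝ)^β * (1 / (1 + latNormSq m) ^ β)) *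
          (cα * (1 + 4 * latNormSq m) ^ (1 - α))
          ≤ (C^2 * (4:ℝ)^β * (1 / (1 + latNormSq m) ^ β)) *
          (cα * (4 * (1 + latNormSq m) ^ (1 - α))) := by
        apply mul_le_mul_of_nonneg_left _ hco2
        exact mul_le_mul_of_nonneg_left h4x hcα.le
      refine le_trans hstep (le_of_eq ?_)
      have := combine_rpow (e1 := β) (e2 := 1 - α) hx
      calc (C^2 * (4:ℝ)^β * (1 / (1 + latNormSq m) ^ β)) *
            (cα * (4 * (1 + latNormSq m) ^ (1 - α)))
          = C^2 * (4:ℝ)^β * cα * 4 *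
            ((1 / (1 + latNormSq m) ^ β) * (1 + latNormSq m) ^ (1 - α)) := by ring
        _ = C^2 * (4:ℝ)^β * cα * 4 * (1 + latNormSq m) ^ (1 - α - β) := by rw [this]
        _ = C^2 * (4:ℝ)^β * cα * 4 * (1 + latNormSq m) ^ (1 - (α + β)) := by
            rw [show 1 - α - β = 1 - (α + β) from by ring]
    have hxpow_nn : (0:ℝ) ≤ (1 + latNormSq m) ^ (1 - (α + β)) := Real.rpow_nonneg hx.le _
    have hfinal : ∑' l, T l ≤
        (C^2 * ((4:ℝ)^α * cβ + 4 * (4:ℝ)^β * cα + (4:ℝ)^β * cγ + (4:ℝ)^α * cγ + cα) + 1) *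
          (1 + latNormSq m) ^ (1 - (α + β)) := by
      have e1 : (∑' l, F1 l) ≤ C^2 * (4:ℝ)^α * cβ * (1 + latNormSq m) ^ (1 - (α + β)) := by
        rw [← hc1']; exact ht1
      have e2 : (∑' l, F2 l) ≤ C^2 * (4:ℝ)^β * cα * 4 * (1 + latNormSq m) ^ (1 - (α + β)) :=
        le_trans ht2 hc2'
      have e3 : (∑' l, F3 l) ≤ C^2 * (4:ℝ)^β * cγ * (1 + latNormSq m) ^ (1 - (α + β)) := by
        refine le_trans ht3 (le_of_eq ?_); ring
      have hcoef : C^2 * (4:ℝ)^α * cβ + C^2 * (4:ℝ)^β * cα * 4 + C^2 * (4:ℝ)^β * cγ ≤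
          C^2 * ((4:ℝ)^α * cβ + 4 * (4:ℝ)^β * cα + (4:ℝ)^β * cγ + (4:ℝ)^α * cγ + cα) + 1 := by
        nlinarith [sq_nonneg C, h4nn α, hcγ, hcα, mul_nonneg (sq_nonneg C) (mul_nonneg (h4nn α) hcγ.le), mul_nonneg (sq_nonneg C) hcα.le]
      have := mul_le_mul_of_nonneg_right hcoef hxpow_nn
      nlinarith [hT_le, e1, e2, e3]
    refine le_trans hfinal (le_of_eq ?_)
    rw [div_eq_mul_inv, ← Real.rpow_neg hx.le, show -(α + β - 1) = 1 - (α + β) from by ring]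
  · rw [max_eq_right hcase]
    have hN0 : (0:ℝ) ≤ (N:ℝ) := Nat.cast_nonneg N
    have h4nn : ∀ e : ℝ, (0:ℝ) ≤ (4:ℝ) ^ e := fun e => Real.rpow_nonneg (by norm_num) e
    have hx : (0:ℝ) < 1 + (N:ℝ)^2 := by positivity
    set G1 : ℤ × ℤ → ℝ := fun l => (C^2 * (4:ℝ)^α) *
      (if (N:ℝ) < Real.sqrt (latNormSq l) then 1 / (1 + latNormSq l) ^ (α + β) else 0) with hG1
    set G2 : ℤ × ℤ → ℝ := fun l => (C^2 * (1 / (1 + (N:ℝ)^2) ^ β)) *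
      (if Real.sqrt (latNormSq (m - l)) ≤ (N:ℝ)
        then 1 / (1 + latNormSq (m - l)) ^ α else 0) with hG2
    have hco1 : (0:ℝ) ≤ C^2 * (4:ℝ)^α := mul_nonneg (sq_nonneg C) (h4nn α)
    have hco2 : (0:ℝ) ≤ C^2 * (1 / (1 + (N:ℝ)^2) ^ β) := by positivity
    have hG1nn : ∀ l, 0 ≤ G1 l := by
      intro l; rw [hG1]; dsimp only
      apply mul_nonneg hco1
      split
      · exact hfrac _ _
      · exact le_rfl
    have hG2nn : ∀ l, 0 ≤ G2 l := by
      intro l; rw [hG2]; dsimp only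
      apply mul_nonneg hco2
      split
      · exact hfrac _ _
      · exact le_rfl
    have hpt : ∀ l, T l ≤ G1 l + G2 l := by
      intro l
      by_cases hN : Real.sqrt (latNormSq l) ≤ (N:ℝ)
      · have hT0' : T l = 0 := by rw [hT_def]; dsimp only; rw [if_pos hN]
        rw [hT0']
        exact add_nonneg (hG1nn l) (hG2nn l)
      · have hTP : T l = K₁ (m - l) * K₂ l := by rw [hT_def]; dsimp only; rw [if_neg hN]
        push_neg at hN
        rw [hTP]
        by_cases hc2 : latNormSq l ≤ 4 * latNormSq (m - l)
        · -- G1 dominates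
          have hc : K₁ (m - l) * K₂ l ≤ G1 l := by
            have hquarter : (1 + latNormSq l) / 4 ≤ 1 + latNormSq (m - l) := by
              have := latNormSq_nonneg l
              linarith
            have hK1b : K₁ (m - l) ≤ C * ((4:ℝ)^α * (1 / (1 + latNormSq l) ^ α)) := by
              calc K₁ (m - l) ≤ C * (1 / (1 + latNormSq (m - l)) ^ α) := by
                    rw [mul_one_div]; exact hK₁ _
                _ ≤ C * ((4:ℝ)^α * (1 / (1 + latNormSq l) ^ α)) :=
                    mul_le_mul_of_nonneg_left
                      (inv_rpow_quarter hα0.le (latNormSq_nonneg l) hquarter) hC.le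
            rw [hG1]; dsimp only
            rw [if_pos hN]
            calc K₁ (m - l) * K₂ l
                ≤ (C * ((4:ℝ)^α * (1 / (1 + latNormSq l) ^ α))) *
                    (C * (1 / (1 + latNormSq l) ^ β)) :=
                  mul_le_mul hK1b (by rw [mul_one_div]; exact hK₂ l) (hK₂0 l)
                    (mul_nonneg hC.le (mul_nonneg (h4nn α) (hfrac _ _)))
              _ = (C^2 * (4:ℝ)^α) *
                    ((1 / (1 + latNormSq l) ^ α) * (1 / (1 + latNormSq l) ^ β)) := by ring
              _ = (C^2 * (4:ℝ)^α) * (1 / (1 + latNormSq l) ^ (α + β)) := by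
                  rw [frac_mul (hgpos l)]
          linarith [hG2nn l]
        · -- G2 dominates
          push_neg at hc2
          have hc : K₁ (m - l) * K₂ l ≤ G2 l := by
            have h2v : 2 * Real.sqrt (latNormSq (m - l)) ≤ Real.sqrt (latNormSq l) := by
              have h4 : Real.sqrt (4 * latNormSq (m - l)) ≤ Real.sqrt (latNormSq l) :=
                Real.sqrt_le_sqrt (by linarith)
              rw [sqrt_four_mul (latNormSq_nonneg (m - l))] at h4
              exact h4
            have htri : Real.sqrt (latNormSq l)
                ≤ Real.sqrt (latNormSq m) + Real.sqrt (latNormSq (m - l)) := by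
              have h := lat_triangle m (l - m)
              rw [add_sub_cancel] at h
              have e : latNormSq (l - m) = latNormSq (m - l) := by
                rw [← latNormSq_neg (l - m), neg_sub]
              rw [e] at h
              exact h
            have hind : Real.sqrt (latNormSq (m - l)) ≤ (N:ℝ) := by
              have h1 : Real.sqrt (latNormSq l) / 2 ≤ Real.sqrt (latNormSq m) := by
                linarith
              linarith
            have hK2b : K₂ l ≤ C * (1 / (1 + (N:ℝ)^2) ^ β) := by
              have hN2 : (N:ℝ)^2 < latNormSq l := (Real.lt_sqrt hN0).mp hN
              calc K₂ l ≤ C * (1 / (1 + latNormSq l) ^ β) := by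
                    rw [mul_one_div]; exact hK₂ _
                _ ≤ C * (1 / (1 + (N:ℝ)^2) ^ β) :=
                    mul_le_mul_of_nonneg_left
                      (inv_rpow_mono hβ0.le (by positivity) (le_of_lt hN2)) hC.le
            rw [hG2]; dsimp only
            rw [if_pos hind]
            calc K₁ (m - l) * K₂ l
                ≤ (C * (1 / (1 + latNormSq (m - l)) ^ α)) * (C * (1 / (1 + (N:ℝ)^2) ^ β)) :=
                  mul_le_mul (by rw [mul_one_div]; exact hK₁ _) hK2b (hK₂0 l)
                    (mul_nonneg hC.le (hfrac _ _))
              _ = (C^2 * (1 / (1 + (N:ℝ)^2) ^ β)) * (1 / (1 + latNormSq (m - l)) ^ α) := by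
                  ring
          linarith [hG1nn l]
    obtain ⟨htlN_sum, htlN_le⟩ := htailγ (N:ℝ) hN0
    obtain ⟨hbαN_sum, hbαN_le⟩ := hballα (N:ℝ) hN0
    have hG1sum : Summable G1 := by
      rw [hG1]; exact htlN_sum.mul_left _
    have hre2 : Summable (fun l : ℤ × ℤ =>
        if Real.sqrt (latNormSq (m - l)) ≤ (N:ℝ)
          then 1 / (1 + latNormSq (m - l)) ^ α else 0) := by
      have h := ((Equiv.subLeft m).summable_iff (f := fun l : ℤ × ℤ =>
        if Real.sqrt (latNormSq l) ≤ (N:ℝ) then 1 / (1 + latNormSq l) ^ α else 0)).mpr hbαN_sum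
      exact h.congr (fun l => by simp [Function.comp, Equiv.subLeft_apply])
    have hG2sum : Summable G2 := by
      rw [hG2]; exact hre2.mul_left _
    have hre2t : (∑' l : ℤ × ℤ,
        if Real.sqrt (latNormSq (m - l)) ≤ (N:ℝ)
          then 1 / (1 + latNormSq (m - l)) ^ α else 0)
        = ∑' l : ℤ × ℤ, (if Real.sqrt (latNormSq l) ≤ (N:ℝ)
          then 1 / (1 + latNormSq l) ^ α else 0) := by
      rw [← (Equiv.subLeft m).tsum_eq (f := fun l : ℤ × ℤ =>
        if Real.sqrt (latNormSq l) ≤ (N:ℝ) then 1 / (1 + latNormSq l) ^ α else 0)]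
      exact tsum_congr (fun l => by rw [Equiv.subLeft_apply])
    have hT_le : ∑' l, T l ≤ (∑' l, G1 l) + (∑' l, G2 l) := by
      calc ∑' l, T l ≤ ∑' l, (G1 l + G2 l) :=
            hTsum.tsum_le_tsum hpt (hG1sum.add hG2sum)
        _ = (∑' l, G1 l) + (∑' l, G2 l) := hG1sum.tsum_add hG2sum
    have ht1 : (∑' l, G1 l) ≤ (C^2 * (4:ℝ)^α) * (cγ * (1 + (N:ℝ)^2) ^ (1 - (α + β))) := by
      rw [hG1, tsum_mul_left]
      exact mul_le_mul_of_nonneg_left htlN_le hco1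
    have ht2 : (∑' l, G2 l) ≤ (C^2 * (1 / (1 + (N:ℝ)^2) ^ β)) *
        (cα * (1 + (N:ℝ)^2) ^ (1 - α)) := by
      rw [hG2, tsum_mul_left, hre2t]
      exact mul_le_mul_of_nonneg_left hbαN_le hco2
    have hc2' : (C^2 * (1 / (1 + (N:ℝ)^2) ^ β)) * (cα * (1 + (N:ℝ)^2) ^ (1 - α))
        = C^2 * cα * (1 + (N:ℝ)^2) ^ (1 - (α + β)) := by
      have := combine_rpow (e1 := β) (e2 := 1 - α) hx
      calc (C^2 * (1 / (1 + (N:ℝ)^2) ^ β)) * (cα * (1 + (N:ℝ)^2) ^ (1 - α))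
          = C^2 * cα * ((1 / (1 + (N:ℝ)^2) ^ β) * (1 + (N:ℝ)^2) ^ (1 - α)) := by ring
        _ = C^2 * cα * (1 + (N:ℝ)^2) ^ (1 - α - β) := by rw [this]
        _ = C^2 * cα * (1 + (N:ℝ)^2) ^ (1 - (α + β)) := by
            rw [show 1 - α - β = 1 - (α + β) from by ring]
    have hxpow_nn : (0:ℝ) ≤ (1 + (N:ℝ)^2) ^ (1 - (α + β)) := Real.rpow_nonneg hx.le _
    have hfinal : ∑' l, T l ≤
        (C^2 * ((4:ℝ)^α * cβ + 4 * (4:ℝ)^β * cα + (4:ℝ)^β * cγ + (4:ℝ)^α * cγ + cα) + 1) *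
          (1 + (N:ℝ)^2) ^ (1 - (α + β)) := by
      have e1 : (∑' l, G1 l) ≤ C^2 * (4:ℝ)^α * cγ * (1 + (N:ℝ)^2) ^ (1 - (α + β)) := by
        refine le_trans ht1 (le_of_eq ?_); ring
      have e2 : (∑' l, G2 l) ≤ C^2 * cα * (1 + (N:ℝ)^2) ^ (1 - (α + β)) := by
        rw [← hc2']; exact ht2
      have hcoef : C^2 * (4:ℝ)^α * cγ + C^2 * cα ≤
          C^2 * ((4:ℝ)^α * cβ + 4 * (4:ℝ)^β * cα + (4:ℝ)^β * cγ + (4:ℝ)^α * cγ + cα) + 1 := by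
        nlinarith [mul_nonneg (sq_nonneg C) (mul_nonneg (h4nn α) hcβ.le),
          mul_nonneg (sq_nonneg C) (mul_nonneg (h4nn β) hcα.le),
          mul_nonneg (sq_nonneg C) (mul_nonneg (h4nn β) hcγ.le)]
      have := mul_le_mul_of_nonneg_right hcoef hxpow_nn
      nlinarith [hT_le, e1, e2]
    refine le_trans hfinal (le_of_eq ?_)
    rw [div_eq_mul_inv, ← Real.rpow_neg hx.le, show -(α + β - 1) = 1 - (α + β) from by ring]
end

section
/- The complex Hermite polynomials H_{k,l}(z, c) := ∑_{m=0}^{min{k,l}} m! · binom(k,m) · binom(l,m) · (−c)^m · z^{k−m} · z̄^{l−m} satisfy, for all z, w ∈ ℂ and c ∈ ℝ, the binomial expansion H_{k,l}(z + w, c) = ∑_{p=0}^{k} ∑_{q=0}^{l} binom(k,p) binom(l,q) H_{p,q}(z, c) w^{k−p} w̄^{l−q}. -/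
open Finset

/-- the complex Hermite polynomials `H_{k,l}(z, c)` -/
noncomputable def complexHermite (k l : ℕ) (z : ℂ) (c : ℝ) : ℂ :=
  ∑ m ∈ Finset.range (min k l + 1),
    (Nat.factorial m : ℂ) * (Nat.choose k m : ℂ) * (Nat.choose l m : ℂ) *
      (-(c : ℂ)) ^ m * z ^ (k - m) * (starRingEnd ℂ z) ^ (l - m)

theorem complexHermite_binomial_expansion (k l : ℕ) (z w : ℂ) (c : ℝ) :
    complexHermite k l (z + w) c =
      ∑ p ∈ Finset.range (k + 1), ∑ q ∈ Finset.range (l + 1),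
        (Nat.choose k p : ℂ) * (Nat.choose l q : ℂ) * complexHermite p q z c *
          w ^ (k - p) * (starRingEnd ℂ w) ^ (l - q) := by
  -- the summand on the left-hand side after binomial expansion
  set F : (Σ _ : ℕ, Σ _ : ℕ, ℕ) → ℂ := fun x =>
    (Nat.factorial x.1 : ℂ) * (Nat.choose k x.1 : ℂ) * (Nat.choose l x.1 : ℂ) *
      (-(c : ℂ)) ^ x.1 * ((Nat.choose (k - x.1) x.2.1 : ℂ) * z ^ x.2.1 *
        w ^ (k - x.1 - x.2.1)) * ((Nat.choose (l - x.1) x.2.2 : ℂ) *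
        (starRingEnd ℂ z) ^ x.2.2 * (starRingEnd ℂ w) ^ (l - x.1 - x.2.2)) with hF
  -- the summand on the right-hand side
  set G : (Σ _ : ℕ, Σ _ : ℕ, ℕ) → ℂ := fun x =>
    (Nat.choose k x.1 : ℂ) * (Nat.choose l x.2.1 : ℂ) *
      ((Nat.factorial x.2.2 : ℂ) * (Nat.choose x.1 x.2.2 : ℂ) *
        (Nat.choose x.2.1 x.2.2 : ℂ) * (-(c : ℂ)) ^ x.2.2 * z ^ (x.1 - x.2.2) *
        (starRingEnd ℂ z) ^ (x.2.1 - x.2.2)) * w ^ (k - x.1) *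
      (starRingEnd ℂ w) ^ (l - x.2.1) with hG
  have lhs_eq : complexHermite k l (z + w) c =
      ∑ x ∈ (Finset.range (min k l + 1)).sigma (fun m =>
          (Finset.range (k - m + 1)).sigma (fun _ => Finset.range (l - m + 1))), F x := by
    rw [Finset.sum_sigma]
    unfold complexHermite
    refine Finset.sum_congr rfl fun m _ => ?_
    rw [Finset.sum_sigma]
    rw [map_add, add_pow, add_pow]
    simp only [Finset.mul_sum, Finset.sum_mul]
    rw [Finset.sum_comm]
    refine Finset.sum_congr rfl fun i _ => ?_
    refine Finset.sum_congr rfl fun j _ => ?_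
    simp only [hF]
    ring
  have rhs_eq :
      (∑ p ∈ Finset.range (k + 1), ∑ q ∈ Finset.range (l + 1),
        (Nat.choose k p : ℂ) * (Nat.choose l q : ℂ) * complexHermite p q z c *
          w ^ (k - p) * (starRingEnd ℂ w) ^ (l - q)) =
      ∑ x ∈ (Finset.range (k + 1)).sigma (fun p =>
          (Finset.range (l + 1)).sigma (fun q => Finset.range (min p q + 1))), G x := by
    rw [Finset.sum_sigma]
    refine Finset.sum_congr rfl fun p _ => ?_
    rw [Finset.sum_sigma]
    refine Finset.sum_congr rfl fun q _ => ?_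
    unfold complexHermite
    simp only [Finset.mul_sum, Finset.sum_mul]
    rfl
  rw [lhs_eq, rhs_eq]
  refine Finset.sum_nbij' (fun x => ⟨x.1 + x.2.1, x.1 + x.2.2, x.1⟩)
    (fun x => ⟨x.2.2, x.1 - x.2.2, x.2.1 - x.2.2⟩) ?_ ?_ ?_ ?_ ?_
  · rintro ⟨m, i, j⟩ hx
    simp only [Finset.mem_sigma, Finset.mem_range] at hx ⊢
    omega
  · rintro ⟨p, q, m⟩ hx
    simp only [Finset.mem_sigma, Finset.mem_range] at hx ⊢
    omega
  · rintro ⟨m, i, j⟩ hx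
    simp only [Finset.mem_sigma, Finset.mem_range] at hx
    simp only [Nat.add_sub_cancel_left]
  · rintro ⟨p, q, m⟩ hx
    simp only [Finset.mem_sigma, Finset.mem_range] at hx
    have h1 : m ≤ p := by omega
    have h2 : m ≤ q := by omega
    simp only [Nat.add_sub_cancel' h1, Nat.add_sub_cancel' h2]
  · rintro ⟨m, i, j⟩ hx
    simp only [Finset.mem_sigma, Finset.mem_range] at hx
    obtain ⟨hm, hi, hj⟩ := hx
    have hmk : m ≤ k := le_trans (by omega) (min_le_left k l)
    have hml : m ≤ l := le_trans (by omega) (min_le_right k l)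
    have hik : m + i ≤ k := by omega
    have hjl : m + j ≤ l := by omega
    -- binomial coefficient identities
    have e1 : Nat.choose k (m + i) * Nat.choose (m + i) m =
        Nat.choose k m * Nat.choose (k - m) i := by
      rw [Nat.choose_mul (n := k) (Nat.le_add_right m i), Nat.add_sub_cancel_left]
    have e2 : Nat.choose l (m + j) * Nat.choose (m + j) m =
        Nat.choose l m * Nat.choose (l - m) j := by
      rw [Nat.choose_mul (n := l) (Nat.le_add_right m j), Nat.add_sub_cancel_left]
    have hN : Nat.factorial m * Nat.choose k m * Nat.choose l m * Nat.choose (k - m) i *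
        Nat.choose (l - m) j =
        Nat.choose k (m + i) * Nat.choose l (m + j) *
          (Nat.factorial m * Nat.choose (m + i) m * Nat.choose (m + j) m) := by
      calc Nat.factorial m * Nat.choose k m * Nat.choose l m * Nat.choose (k - m) i *
          Nat.choose (l - m) j
          = Nat.factorial m * (Nat.choose k m * Nat.choose (k - m) i) *
            (Nat.choose l m * Nat.choose (l - m) j) := by ring
        _ = Nat.factorial m * (Nat.choose k (m + i) * Nat.choose (m + i) m) *
            (Nat.choose l (m + j) * Nat.choose (m + j) m) := by rw [e1, e2]
        _ = _ := by ring
    simp only [hF, hG]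
    have ep1 : m + i - m = i := by omega
    have ep2 : m + j - m = j := by omega
    have ep3 : k - (m + i) = k - m - i := by omega
    have ep4 : l - (m + j) = l - m - j := by omega
    rw [ep1, ep2, ep3, ep4]
    calc (Nat.factorial m : ℂ) * (Nat.choose k m : ℂ) * (Nat.choose l m : ℂ) *
        (-(c : ℂ)) ^ m * ((Nat.choose (k - m) i : ℂ) * z ^ i * w ^ (k - m - i)) *
        ((Nat.choose (l - m) j : ℂ) * (starRingEnd ℂ z) ^ j *
          (starRingEnd ℂ w) ^ (l - m - j))
        = ((Nat.factorial m * Nat.choose k m * Nat.choose l m * Nat.choose (k - m) i *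
            Nat.choose (l - m) j : ℕ) : ℂ) * ((-(c : ℂ)) ^ m * z ^ i *
            (starRingEnd ℂ z) ^ j * w ^ (k - m - i) *
            (starRingEnd ℂ w) ^ (l - m - j)) := by push_cast; ring
      _ = ((Nat.choose k (m + i) * Nat.choose l (m + j) *
            (Nat.factorial m * Nat.choose (m + i) m * Nat.choose (m + j) m) : ℕ) : ℂ) *
            ((-(c : ℂ)) ^ m * z ^ i * (starRingEnd ℂ z) ^ j * w ^ (k - m - i) *
            (starRingEnd ℂ w) ^ (l - m - j)) := by rw [hN]
      _ = _ := by push_cast; ring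
end

section
/- For x₁ ∈ (0, 1] and x₂ ∈ [0, 1], let f(x₁, x₂) = √(log(1/x₁)) · e^{2πi x₂} ∈ ℂ. Then for every pair (k, l) ∈ ℕ² with (k, l) ≠ (0, 0), ∫_0^1 ∫_0^1 H_{k,l}(f(x₁, x₂), 1) dx₁ dx₂ = 0. -/
open Real MeasureTheory intervalIntegral

noncomputable def Pj (j : ℕ) (x : ℝ) : ℝ :=
  x * ∑ i ∈ Finset.range (j+1), ((j.factorial : ℝ) / (i.factorial : ℝ)) * (-Real.log x)^i

lemma hasDerivAt_Pj (j : ℕ) {x : ℝ} (hx : 0 < x) :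
    HasDerivAt (Pj j) ((-Real.log x) ^ j) x := by
  have hlog : HasDerivAt (fun y : ℝ => -Real.log y) (-x⁻¹) x := (Real.hasDerivAt_log hx.ne').neg
  have hq : HasDerivAt
      (fun y => ∑ i ∈ Finset.range (j+1), ((j.factorial : ℝ) / (i.factorial : ℝ)) * (-Real.log y)^i)
      (∑ i ∈ Finset.range (j+1), ((j.factorial : ℝ) / (i.factorial : ℝ)) *
        ((i : ℝ) * (-Real.log x)^(i-1) * (-x⁻¹))) x := by
    apply HasDerivAt.fun_sum
    intro i _
    exact (hlog.pow i).const_mul _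
  have hP := (hasDerivAt_id x).mul hq
  convert hP using 1
  · rfl
  · rfl
  · rfl
  rw [one_mul, Finset.mul_sum, id_eq]
  set t := -Real.log x with ht
  have hx' : x ≠ 0 := hx.ne'
  have h1 : ∀ i ∈ Finset.range (j+1),
      x * (((j.factorial : ℝ) / (i.factorial : ℝ)) * ((i : ℝ) * t^(i-1) * (-x⁻¹)))
        = -(((j.factorial : ℝ) / (i.factorial : ℝ)) * (i : ℝ) * t^(i-1)) := by
    intro i _; field_simp
  rw [Finset.sum_congr rfl h1, Finset.sum_neg_distrib]
  have h2 : ∑ i ∈ Finset.range (j+1),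
      ((j.factorial : ℝ) / (i.factorial : ℝ)) * (i : ℝ) * t^(i-1)
      = ∑ i ∈ Finset.range j, ((j.factorial : ℝ) / (i.factorial : ℝ)) * t^i := by
    rw [Finset.sum_range_succ']
    simp only [Nat.cast_zero, mul_zero, zero_mul, add_zero]
    apply Finset.sum_congr rfl
    intro i _
    have : ((i+1).factorial : ℝ) = (i+1) * i.factorial := by
      rw [Nat.factorial_succ]; push_cast; ring
    rw [this]
    have h3 : ((i:ℝ)+1) ≠ 0 := by positivity
    have h4 : (i.factorial : ℝ) ≠ 0 := Nat.cast_ne_zero.mpr i.factorial_ne_zero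
    field_simp
    rw [Nat.add_sub_cancel]; push_cast; ring
  rw [h2, Finset.sum_range_succ]
  have : ((j.factorial : ℝ) / (j.factorial : ℝ)) = 1 := div_self (Nat.cast_ne_zero.mpr j.factorial_ne_zero)
  rw [this, one_mul]
  ring

lemma tendsto_mul_neg_log_pow (i : ℕ) :
    Filter.Tendsto (fun x : ℝ => x * (-Real.log x)^i) (nhdsWithin 0 (Set.Ioi 0)) (nhds 0) := by
  have h1 : Filter.Tendsto (fun y : ℝ => Real.log y ^ i / y) Filter.atTop (nhds 0) := by
    have := Real.tendsto_pow_log_div_mul_add_atTop 1 0 i one_ne_zero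
    simpa using this
  have h2 := h1.comp tendsto_inv_nhdsGT_zero
  apply h2.congr'
  filter_upwards [self_mem_nhdsWithin] with x (hx : x ∈ Set.Ioi 0)
  have hx' : x ≠ 0 := ne_of_gt hx
  simp only [Function.comp_apply, Real.log_inv, inv_inv]
  field_simp

lemma continuousOn_Pj (j : ℕ) : ContinuousOn (Pj j) (Set.Icc 0 1) := by
  intro x hx
  rcases eq_or_ne x 0 with rfl | hx0
  · rw [← continuousWithinAt_diff_self]
    have hPj0 : Pj j 0 = 0 := by simp [Pj]
    have key : Filter.Tendsto (Pj j) (nhdsWithin 0 (Set.Ioi 0)) (nhds (Pj j 0)) := by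
      rw [hPj0]
      have : Filter.Tendsto (fun x => ∑ i ∈ Finset.range (j+1),
          ((j.factorial : ℝ) / (i.factorial : ℝ)) * (x * (-Real.log x)^i))
          (nhdsWithin 0 (Set.Ioi 0)) (nhds 0) := by
        have : Filter.Tendsto (fun x => ∑ i ∈ Finset.range (j+1),
            ((j.factorial : ℝ) / (i.factorial : ℝ)) * (x * (-Real.log x)^i))
            (nhdsWithin 0 (Set.Ioi 0))
            (nhds (∑ i ∈ Finset.range (j+1), ((j.factorial : ℝ) / (i.factorial : ℝ)) * 0)) := by
          apply tendsto_finset_sum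
          intro i _
          exact (tendsto_mul_neg_log_pow i).const_mul _
        simpa using this
      apply this.congr
      intro x
      simp [Pj, Finset.mul_sum]
      apply Finset.sum_congr rfl
      intro i _
      ring
    exact key.mono_left (nhdsWithin_mono _ (by intro y hy; exact lt_of_le_of_ne hy.1.1 (by simpa using Ne.symm hy.2)))
  · have hx1 : 0 < x := lt_of_le_of_ne hx.1 (Ne.symm hx0)
    exact ((hasDerivAt_Pj j hx1).continuousAt).continuousWithinAt

lemma intervalIntegrable_neg_log_pow (j : ℕ) :
    IntervalIntegrable (fun x : ℝ => (-Real.log x)^j) volume 0 1 := by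
  apply intervalIntegral.intervalIntegrable_deriv_of_nonneg
  · rw [Set.uIcc_of_le zero_le_one]; exact continuousOn_Pj j
  · intro x hx
    rw [min_eq_left zero_le_one, max_eq_right zero_le_one] at hx  -- inf/sup
    exact hasDerivAt_Pj j hx.1
  · intro x hx
    rw [min_eq_left zero_le_one, max_eq_right zero_le_one] at hx
    have : Real.log x ≤ 0 := Real.log_nonpos hx.1.le hx.2.le
    exact pow_nonneg (by linarith) j

lemma integral_neg_log_pow (j : ℕ) :
    ∫ x in (0:ℝ)..1, (-Real.log x)^j = (j.factorial : ℝ) := by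
  rw [intervalIntegral.integral_eq_sub_of_hasDerivAt_of_le zero_le_one (continuousOn_Pj j)
    (fun x hx => hasDerivAt_Pj j hx.1) (intervalIntegrable_neg_log_pow j)]
  have h1 : Pj j 1 = (j.factorial : ℝ) := by
    simp only [Pj, Real.log_one, neg_zero, one_mul]
    rw [Finset.sum_eq_single 0]
    · simp
    · intro i _ hi; simp [zero_pow hi]
    · simp
  have h0 : Pj j 0 = 0 := by simp [Pj]
  rw [h1, h0, sub_zero]

open Complex

lemma inner_exp_integral (a b : ℕ) :
    (∫ x : ℝ in (0:ℝ)..1,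
        Complex.exp (2 * π * Complex.I * x) ^ a *
          (starRingEnd ℂ (Complex.exp (2 * π * Complex.I * x))) ^ b)
      = if a = b then 1 else 0 := by
  have hconj : ∀ x : ℝ, starRingEnd ℂ (Complex.exp (2 * π * Complex.I * x))
      = Complex.exp (-(2 * π * Complex.I * x)) := by
    intro x
    rw [← Complex.exp_conj]
    simp only [map_mul, map_ofNat, Complex.conj_ofReal, Complex.conj_I]
    ring_nf
  have hint : ∀ x : ℝ,
      Complex.exp (2 * π * Complex.I * x) ^ a *
        (starRingEnd ℂ (Complex.exp (2 * π * Complex.I * x))) ^ b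
      = Complex.exp ((((a:ℂ) - b) * (2 * π * Complex.I)) * x) := by
    intro x
    rw [hconj, ← Complex.exp_nat_mul, ← Complex.exp_nat_mul, ← Complex.exp_add]
    congr 1
    ring
  simp only [hint]
  rcases eq_or_ne a b with rfl | hab
  · simp
  · rw [if_neg hab]
    have hc : ((a:ℂ) - b) * (2 * π * Complex.I) ≠ 0 := by
      apply mul_ne_zero
      · rw [sub_ne_zero]
        exact_mod_cast fun hh => hab (Nat.cast_injective hh)
      · simp [Real.pi_ne_zero, Complex.I_ne_zero]
    rw [integral_exp_mul_complex hc]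
    have h1 : Complex.exp (((a:ℂ) - b) * (2 * π * Complex.I) * (1:ℝ)) = 1 := by
      have := Complex.exp_int_mul_two_pi_mul_I ((a:ℤ) - b)
      simpa using this
    have h0 : Complex.exp (((a:ℂ) - b) * (2 * π * Complex.I) * (0:ℝ)) = 1 := by
      simp
    rw [h1, h0, sub_self, zero_div]
open Real Complex

/-- `f(x₁, x₂) = √(log(1/x₁)) e^{2πi x₂}` -/
noncomputable def fC (x₁ x₂ : ℝ) : ℂ :=
  (Real.sqrt (Real.log (1 / x₁)) : ℂ) * Complex.exp (2 * π * Complex.I * x₂)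

theorem integral_complexHermite_eq_zero (k l : ℕ) (h : (k, l) ≠ (0, 0)) :
    (∫ x₁ in (0:ℝ)..1, ∫ x₂ in (0:ℝ)..1, complexHermite k l (fC x₁ x₂) 1) = 0 := by
  have hinner : ∀ x₁ : ℝ, (∫ x₂ in (0:ℝ)..1, complexHermite k l (fC x₁ x₂) 1)
      = ∑ m ∈ Finset.range (min k l + 1),
          ((m.factorial : ℂ) * (k.choose m : ℂ) * (l.choose m : ℂ) * (-1)^m *
            ((Real.sqrt (Real.log (1/x₁)) : ℂ))^(k-m) *
            ((Real.sqrt (Real.log (1/x₁)) : ℂ))^(l-m)) *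
          (if k - m = l - m then 1 else 0) := by
    intro x₁
    set r : ℂ := ((Real.sqrt (Real.log (1/x₁)) : ℝ) : ℂ) with hr
    have hfun : ∀ x₂ : ℝ, complexHermite k l (fC x₁ x₂) 1
        = ∑ m ∈ Finset.range (min k l + 1),
            ((m.factorial : ℂ) * (k.choose m : ℂ) * (l.choose m : ℂ) * (-1)^m *
              r^(k-m) * r^(l-m)) *
              (Complex.exp (2*π*Complex.I*x₂)^(k-m) *
                (starRingEnd ℂ (Complex.exp (2*π*Complex.I*x₂)))^(l-m)) := by
      intro x₂
      unfold complexHermite fC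
      apply Finset.sum_congr rfl
      intro m _
      rw [mul_pow, map_mul, mul_pow]
      have hcr : starRingEnd ℂ r = r := by rw [hr, Complex.conj_ofReal]
      rw [hcr]
      push_cast
      ring
    simp only [hfun]
    rw [intervalIntegral.integral_finset_sum]
    · apply Finset.sum_congr rfl
      intro m _
      rw [intervalIntegral.integral_const_mul, inner_exp_integral]
    · intro m _
      apply Continuous.intervalIntegrable
      simp only [starRingEnd_apply]
      fun_prop
  rcases eq_or_ne k l with rfl | hne
  · -- k = l, k ≠ 0
    have hk : k ≠ 0 := by
      intro hk0; exact h (by simp [hk0])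
    have houter : (∫ x₁ in (0:ℝ)..1, ∫ x₂ in (0:ℝ)..1, complexHermite k k (fC x₁ x₂) 1)
        = ∫ x₁ in (0:ℝ)..1,
            ((∑ m ∈ Finset.range (k + 1),
              ((m.factorial : ℝ) * (k.choose m : ℝ) * (k.choose m : ℝ) * (-1)^m) *
                (-Real.log x₁)^(k-m) : ℝ) : ℂ) := by
      apply intervalIntegral.integral_congr
      intro x hx
      rw [Set.uIcc_of_le zero_le_one] at hx
      dsimp only
      rw [hinner, min_self]
      push_cast
      apply Finset.sum_congr rfl
      intro m _
      have hlog : Real.log (1/x) = -Real.log x := by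
        rw [one_div, Real.log_inv]
      have hnn : 0 ≤ -Real.log x := by
        have := Real.log_nonpos hx.1 hx.2
        linarith
      have hsq : ((Real.sqrt (Real.log (1/x)) : ℂ))^(k-m) * ((Real.sqrt (Real.log (1/x)) : ℂ))^(k-m)
          = (((-Real.log x)^(k-m) : ℝ) : ℂ) := by
        rw [← mul_pow, ← Complex.ofReal_mul, Real.mul_self_sqrt (by rw [hlog]; exact hnn), hlog]
        push_cast
        ring
      rw [if_pos rfl, mul_one]
      rw [mul_assoc _ (((Real.sqrt (Real.log (1/x)) : ℂ))^(k-m)) _, hsq]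
      push_cast
      ring
    rw [houter, intervalIntegral.integral_ofReal]
    norm_num
    rw [intervalIntegral.integral_finset_sum (fun m _ =>
      ((intervalIntegrable_neg_log_pow (k-m)).const_mul _))]
    have hval : ∀ m ∈ Finset.range (k+1),
        (∫ x₁ in (0:ℝ)..1, ((m.factorial : ℝ) * (k.choose m : ℝ) * (k.choose m : ℝ) * (-1)^m) *
            (-Real.log x₁)^(k-m))
          = (-1)^m * (k.factorial : ℝ) * (k.choose m : ℝ) := by
      intro m hm
      have hmk : m ≤ k := Nat.lt_succ_iff.mp (Finset.mem_range.mp hm)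
      rw [intervalIntegral.integral_const_mul, integral_neg_log_pow]
      have hid : (k.choose m : ℝ) * (m.factorial : ℝ) * ((k-m).factorial : ℝ) = (k.factorial : ℝ) := by
        exact_mod_cast congrArg (Nat.cast (R := ℝ)) (Nat.choose_mul_factorial_mul_factorial hmk)
      calc ((m.factorial : ℝ) * (k.choose m : ℝ) * (k.choose m : ℝ) * (-1)^m) * ((k-m).factorial : ℝ)
          = (-1)^m * (k.choose m : ℝ) * ((k.choose m : ℝ) * (m.factorial : ℝ) * ((k-m).factorial : ℝ)) := by ring
        _ = (-1)^m * (k.factorial : ℝ) * (k.choose m : ℝ) := by rw [hid]; ring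
    rw [Finset.sum_congr rfl hval]
    have halt : ∑ m ∈ Finset.range (k+1), ((-1:ℝ))^m * (k.choose m : ℝ) = 0 := by
      have := Int.alternating_sum_range_choose_of_ne hk
      exact_mod_cast this
    calc ∑ m ∈ Finset.range (k+1), (-1:ℝ)^m * (k.factorial : ℝ) * (k.choose m : ℝ)
        = (k.factorial : ℝ) * ∑ m ∈ Finset.range (k+1), (-1:ℝ)^m * (k.choose m : ℝ) := by
          rw [Finset.mul_sum]; apply Finset.sum_congr rfl; intro m _; ring
      _ = 0 := by rw [halt, mul_zero]
  · -- k ≠ l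
    have hzero : ∀ x₁ : ℝ, (∫ x₂ in (0:ℝ)..1, complexHermite k l (fC x₁ x₂) 1) = 0 := by
      intro x₁
      rw [hinner]
      apply Finset.sum_eq_zero
      intro m hm
      have hm' : m ≤ min k l := Nat.lt_succ_iff.mp (Finset.mem_range.mp hm)
      have hmk : m ≤ k := le_trans hm' (min_le_left _ _)
      have hml : m ≤ l := le_trans hm' (min_le_right _ _)
      have : ¬ (k - m = l - m) := by omega
      rw [if_neg this, mul_zero]
    simp only [hzero, intervalIntegral.integral_zero]
end
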